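/- arXiv:0908.0705 — 2 statements merged into one kernel-verified Lean document; each statement's English description precedes it below -/
import Mathlib

section
/- Let G be a finitely generated group acting 3-discontinuously and 2-cocompactly on a compactum T, and let T̃ = Λ(G) ⊔ G be the attractor-sum compactification with shortcut metric δ̄₁. For every constant c > 0 and every subset M ⊆ T̃, the closure of the c-quasigeodesic hull H_c M meets T exactly where the closure of M does: T ∩ cl(M) = T ∩ cl(H_c M). (The Main Lemma.) -/
open Filter Topology

/-- The vertex set of a locally finite connected graph, presented via its
graph metric `d` (an integer-valued geodesic metric with finite balls). -/
structure GraphDist (V : Type) where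
  d : V → V → ℕ
  d_self : ∀ x, d x x = 0
  eq_of_d : ∀ x y, d x y = 0 → x = y
  d_symm : ∀ x y, d x y = d y x
  d_tri : ∀ x y z, d x z ≤ d x y + d y z
  locallyFinite : ∀ (x : V) (n : ℕ), {y | d x y ≤ n}.Finite
  geodesic : ∀ x y, 0 < d x y → ∃ z, d x z = 1 ∧ d z y + 1 = d x y

namespace GraphDist

variable {V : Type} (G : GraphDist V)

/-- `γ : Fin (n+1) → V` is an edge path (consecutive vertices at distance `≤ 1`). -/
def IsPath {n : ℕ} (γ : Fin (n + 1) → V) : Prop :=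
  ∀ i : Fin n, G.d (γ i.castSucc) (γ i.succ) ≤ 1

/-- Floyd length of a path with respect to the scaling function `f` and
basepoint `v`: the edge `{x,y}` has length `f (d v {x,y})`. -/
def floydLen (f : ℕ → ℝ) (v : V) {n : ℕ} (γ : Fin (n + 1) → V) : ℝ :=
  ∑ i : Fin n, f (min (G.d v (γ i.castSucc)) (G.d v (γ i.succ)))

/-- Floyd distance: infimal Floyd length of edge paths joining two vertices. -/
noncomputable def floydDist (f : ℕ → ℝ) (v : V) (a b : V) : ℝ :=
  sInf {L | ∃ (n : ℕ) (γ : Fin (n + 1) → V), G.IsPath γ ∧ γ 0 = a ∧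
    γ (Fin.last n) = b ∧ L = G.floydLen f v γ}

/-- A finite `c`-quasigeodesic path. -/
def IsQuasigeodesic (c : ℝ) {n : ℕ} (γ : Fin (n + 1) → V) : Prop :=
  G.IsPath γ ∧ ∀ s t : Fin (n + 1),
    (1 / c) * |(s : ℝ) - (t : ℝ)| - c ≤ (G.d (γ s) (γ t) : ℝ) ∧
    (G.d (γ s) (γ t) : ℝ) ≤ c * |(s : ℝ) - (t : ℝ)| + c

/-- A `c`-quasigeodesic ray. -/
def IsQuasigeodesicRay (c : ℝ) (γ : ℕ → V) : Prop :=
  (∀ n : ℕ, G.d (γ n) (γ (n + 1)) ≤ 1) ∧ ∀ s t : ℕ,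
    (1 / c) * |(s : ℝ) - (t : ℝ)| - c ≤ (G.d (γ s) (γ t) : ℝ) ∧
    (G.d (γ s) (γ t) : ℝ) ≤ c * |(s : ℝ) - (t : ℝ)| + c

/-- A finite `α`-distorted (`α`-geodesic) path. -/
def IsAlphaPath (α : ℕ → ℝ) {n : ℕ} (γ : Fin (n + 1) → V) : Prop :=
  G.IsPath γ ∧ ∀ s t : Fin (n + 1),
    (G.d (γ s) (γ t) : ℝ) ≤ α (Nat.dist s t) ∧
    (Nat.dist (s : ℕ) (t : ℕ) : ℝ) ≤ α (G.d (γ s) (γ t))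

/-- An `α`-geodesic ray. -/
def IsAlphaRay (α : ℕ → ℝ) (γ : ℕ → V) : Prop :=
  (∀ n : ℕ, G.d (γ n) (γ (n + 1)) ≤ 1) ∧ ∀ s t : ℕ,
    (G.d (γ s) (γ t) : ℝ) ≤ α (Nat.dist s t) ∧
    (Nat.dist s t : ℝ) ≤ α (G.d (γ s) (γ t))

end GraphDist

/-- `f` is a Floyd scaling function with ratio constant `K`. -/
def IsFloydFunction (f : ℕ → ℝ) (K : ℝ) : Prop :=
  (∀ n, 0 < f n) ∧ (∀ n, 1 ≤ f n / f (n + 1) ∧ f n / f (n + 1) ≤ K) ∧ Summable f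

/-- `α` is a distortion function: non-decreasing with `α n ≥ n`. -/
def IsDistortion (α : ℕ → ℝ) : Prop :=
  (∀ n, 0 < α n) ∧ Monotone α ∧ ∀ n : ℕ, (n : ℝ) ≤ α n

/-- The set of ordered triples of pairwise distinct points of `T`
(a model for the space `Θ³T` of distinct triples). -/
def distinctTriples (T : Type) : Set (T × T × T) :=
  {x | x.1 ≠ x.2.1 ∧ x.1 ≠ x.2.2 ∧ x.2.1 ≠ x.2.2}

/-- Diagonal action of a group element on triples. -/
def tripleSmul {G T : Type} [Group G] [MulAction G T] (g : G) (x : T × T × T) :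
    T × T × T :=
  (g • x.1, g • x.2.1, g • x.2.2)

/-- The action of `G` on `T` is 3-discontinuous (convergence property): the
induced action on the space of distinct triples is properly discontinuous. -/
def ThreeDiscontinuous (G T : Type) [Group G] [MulAction G T]
    [TopologicalSpace T] : Prop :=
  ∀ K L : Set (T × T × T), K ⊆ distinctTriples T → L ⊆ distinctTriples T →
    IsCompact K → IsCompact L →
    {g : G | (tripleSmul g '' K ∩ L).Nonempty}.Finite

/-- The action of `G` on `T` is 3-cocompact: `Θ³T / G` is compact, i.e. there is
a compact fundamental set for the action on distinct triples. -/
def ThreeCocompact (G T : Type) [Group G] [MulAction G T]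
    [TopologicalSpace T] : Prop :=
  ∃ K : Set (T × T × T), K ⊆ distinctTriples T ∧ IsCompact K ∧
    ∀ x ∈ distinctTriples T, ∃ g : G, tripleSmul g x ∈ K

/-- The action of `G` on `T` is 2-cocompact: there is a compact fundamental set
for the action on pairs of distinct points. -/
def TwoCocompact (G T : Type) [Group G] [MulAction G T]
    [TopologicalSpace T] : Prop :=
  ∃ K : Set (T × T), K ⊆ {x | x.1 ≠ x.2} ∧ IsCompact K ∧
    ∀ x : T × T, x.1 ≠ x.2 → ∃ g : G, (g • x.1, g • x.2) ∈ K

/-- `x` is a conical (limit) point for the action of `G` on `T`: there are an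
injective sequence `gₙ` in `G` and distinct points `a ≠ b` with `gₙ • y → a`
for every `y ≠ x` and `gₙ • x → b`. -/
def IsConical (G : Type) {T : Type} [Group G] [MulAction G T]
    [TopologicalSpace T] (x : T) : Prop :=
  ∃ (g : ℕ → G) (a b : T), Function.Injective g ∧ a ≠ b ∧
    (∀ y : T, y ≠ x → Tendsto (fun n => g n • y) atTop (nhds a)) ∧
    Tendsto (fun n => g n • x) atTop (nhds b)

/-- `x` is a limit point of the subgroup `H` acting on `T`: some orbit
accumulates at `x` along an injective sequence in `H`. -/
def IsLimitPointOf {G T : Type} [Group G] [MulAction G T] [TopologicalSpace T]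
    (H : Subgroup G) (x : T) : Prop :=
  ∃ u : ℕ → H, Function.Injective u ∧
    ∃ t : T, Tendsto (fun n => (u n : G) • t) atTop (nhds x)

/-- `p` is a parabolic point: the limit set of its stabilizer is exactly `{p}`. -/
def IsParabolicPt (G : Type) {T : Type} [Group G] [MulAction G T]
    [TopologicalSpace T] (p : T) : Prop :=
  {x : T | IsLimitPointOf (MulAction.stabilizer G p) x} = {p}
namespace GraphDist

variable {V : Type} (G : GraphDist V)

/-- A bi-infinite `c`-quasigeodesic line. -/
def IsQuasigeodesicLine (c : ℝ) (γ : ℤ → V) : Prop :=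
  (∀ n : ℤ, G.d (γ n) (γ (n + 1)) ≤ 1) ∧ ∀ s t : ℤ,
    (1 / c) * |(s : ℝ) - (t : ℝ)| - c ≤ (G.d (γ s) (γ t) : ℝ) ∧
    (G.d (γ s) (γ t) : ℝ) ≤ c * |(s : ℝ) - (t : ℝ)| + c

end GraphDist

/-- The `c`-quasigeodesic hull of a subset `M` of the attractor sum
`T̃ = T ⊔ G` (where `G` sits in `T̃` as the orbit of the basepoint `o`): the
union of `M` with the images of all finite `c`-quasigeodesics with endpoints in
`M`, all `c`-quasigeodesic rays with start and target in `M`, and all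
bi-infinite `c`-quasigeodesics with both targets in `M`. -/
def qHull {G Tt : Type} [Group G] [MulAction G Tt] [TopologicalSpace Tt]
    (dG : GraphDist G) (o : Tt) (c : ℝ) (M : Set Tt) : Set Tt :=
  M ∪
  {x | ∃ (n : ℕ) (γ : Fin (n + 1) → G), dG.IsQuasigeodesic c γ ∧
    γ 0 • o ∈ M ∧ γ (Fin.last n) • o ∈ M ∧ ∃ i, x = γ i • o} ∪
  {x | ∃ γ : ℕ → G, dG.IsQuasigeodesicRay c γ ∧ γ 0 • o ∈ M ∧
    (∃ q ∈ M, Tendsto (fun k : ℕ => γ k • o) atTop (nhds q)) ∧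
    ∃ i, x = γ i • o} ∪
  {x | ∃ γ : ℤ → G, dG.IsQuasigeodesicLine c γ ∧
    (∃ q ∈ M, Tendsto (fun k : ℕ => γ (k : ℤ) • o) atTop (nhds q)) ∧
    (∃ q ∈ M, Tendsto (fun k : ℕ => γ (-(k : ℤ)) • o) atTop (nhds q)) ∧
    ∃ i : ℤ, x = γ i • o}


noncomputable def tailS (f : ℕ → ℝ) (N : ℕ) : ℝ := ∑' k, f (k + N)

lemma tailS_nonneg {f : ℕ → ℝ} (hf0 : ∀ n, 0 ≤ f n) (N : ℕ) : 0 ≤ tailS f N :=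
  tsum_nonneg fun _ => hf0 _

lemma tailS_anti {f : ℕ → ℝ} (hfa : ∀ n, f (n + 1) ≤ f n) (hfs : Summable f) :
    Antitone (tailS f) := by
  refine antitone_nat_of_succ_le fun N => ?_
  have h1 : Summable fun k => f (k + (N + 1)) := (summable_nat_add_iff _).2 hfs
  have h2 : Summable fun k => f (k + N) := (summable_nat_add_iff _).2 hfs
  refine Summable.tsum_le_tsum (fun k => ?_) h1 h2
  have h3 : k + (N + 1) = (k + N) + 1 := by ring
  rw [h3]; exact hfa _

lemma le_tailS {f : ℕ → ℝ} (hf0 : ∀ n, 0 ≤ f n) (hfs : Summable f) (n : ℕ) :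
    f n ≤ tailS f n := by
  have h : Summable fun k => f (k + n) := (summable_nat_add_iff _).2 hfs
  have h2 := Summable.le_tsum h 0 (fun j _ => hf0 _)
  simpa [tailS] using h2

lemma sum_Icc_le_tailS {f : ℕ → ℝ} (hf0 : ∀ n, 0 ≤ f n) (hfs : Summable f) (a b : ℕ) :
    ∑ v ∈ Finset.Icc a b, f v ≤ tailS f a := by
  classical
  have h : Summable fun k => f (k + a) := (summable_nat_add_iff _).2 hfs
  have hinj : ∀ x ∈ Finset.Icc a b, ∀ y ∈ Finset.Icc a b, x - a = y - a → x = y := by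
    intro x hx y hy hxy
    have hx' := (Finset.mem_Icc.1 hx).1
    have hy' := (Finset.mem_Icc.1 hy).1
    omega
  have h1 : ∑ k ∈ (Finset.Icc a b).image (· - a), f (k + a)
      = ∑ v ∈ Finset.Icc a b, f ((v - a) + a) := Finset.sum_image hinj
  have h2 : ∑ v ∈ Finset.Icc a b, f ((v - a) + a) = ∑ v ∈ Finset.Icc a b, f v := by
    refine Finset.sum_congr rfl fun v hv => ?_
    have hv' := (Finset.mem_Icc.1 hv).1
    congr 1; omega
  rw [← h2, ← h1]
  exact Summable.sum_le_tsum _ (fun k _ => hf0 _) h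

lemma tailS_tendsto (f : ℕ → ℝ) : Tendsto (tailS f) atTop (nhds 0) :=
  tendsto_sum_nat_add f

lemma mul_le_two_tailS {f : ℕ → ℝ} (hf0 : ∀ n, 0 ≤ f n) (hanti : Antitone f)
    (hfs : Summable f) (m : ℕ) : (m : ℝ) * f m ≤ 2 * tailS f (m / 2) := by
  set p := m / 2 with hp
  have hcard : (Finset.Icc (p + 1) m).card = m - p := by rw [Nat.card_Icc]; omega
  have h1 : (Finset.Icc (p + 1) m).card • f m ≤ ∑ v ∈ Finset.Icc (p + 1) m, f v :=
    Finset.card_nsmul_le_sum _ _ _ (fun v hv => hanti (Finset.mem_Icc.1 hv).2)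
  have h2 : ∑ v ∈ Finset.Icc (p + 1) m, f v ≤ tailS f (p + 1) := sum_Icc_le_tailS hf0 hfs _ _
  have h3 : tailS f (p + 1) ≤ tailS f p :=
    tailS_anti (fun n => hanti (Nat.le_succ n)) hfs (Nat.le_succ p)
  have h4 : ((m - p : ℕ) : ℝ) * f m ≤ tailS f p := by
    rw [← hcard]; rw [← nsmul_eq_mul]; exact le_trans h1 (le_trans h2 h3)
  have h5 : (m : ℝ) ≤ 2 * ((m - p : ℕ) : ℝ) := by
    have : m ≤ 2 * (m - p) := by omega
    exact_mod_cast this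
  have h6 : (m : ℝ) * f m ≤ 2 * ((m - p : ℕ) : ℝ) * f m :=
    mul_le_mul_of_nonneg_right h5 (hf0 m)
  linarith

section Karlsson

variable {V : Type}

lemma floydLen_nonneg (dG : GraphDist V) {f : ℕ → ℝ} (hf0 : ∀ n, 0 ≤ f n) (v : V)
    {n : ℕ} (γ : Fin (n + 1) → V) : 0 ≤ dG.floydLen f v γ :=
  Finset.sum_nonneg fun _ _ => hf0 _

lemma floydDist_le_floydLen (dG : GraphDist V) {f : ℕ → ℝ} (hf0 : ∀ n, 0 ≤ f n) (v : V)
    {n : ℕ} (γ : Fin (n + 1) → V) (h : dG.IsPath γ) :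
    dG.floydDist f v (γ 0) (γ (Fin.last n)) ≤ dG.floydLen f v γ := by
  refine csInf_le ⟨0, ?_⟩ ⟨n, γ, h, rfl, rfl, rfl⟩
  rintro L ⟨n', γ', _, _, _, rfl⟩
  exact floydLen_nonneg dG hf0 v γ'

lemma karlsson (dG : GraphDist V) (v : V) (f : ℕ → ℝ)
    (hf0 : ∀ n, 0 < f n) (hfa : ∀ n, f (n + 1) ≤ f n) (hfs : Summable f)
    (c : ℝ) (hc : 0 < c) (ε : ℝ) (hε : 0 < ε) :
    ∃ D : ℕ, ∀ (n : ℕ) (γ : Fin (n + 1) → V), dG.IsQuasigeodesic c γ →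
      (∀ t, D ≤ dG.d v (γ t)) → dG.floydLen f v γ ≤ ε := by
  classical
  have hanti : Antitone f := antitone_nat_of_succ_le hfa
  have hf0' : ∀ n, 0 ≤ f n := fun n => (hf0 n).le
  set C : ℝ := 2 * c ^ 2 + 10 * c + 4 with hC
  have hCpos : 0 < C := by positivity
  obtain ⟨N, hN⟩ := ((tailS_tendsto f).eventually
    (gt_mem_nhds (show (0 : ℝ) < ε / C by positivity))).exists
  refine ⟨2 * N, ?_⟩
  intro n γ hγ hfar
  obtain ⟨t₀, -, ht₀⟩ := Finset.exists_min_image Finset.univ (fun t => dG.d v (γ t))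
    ⟨0, Finset.mem_univ 0⟩
  set m := dG.d v (γ t₀) with hm
  have hmin : ∀ t, m ≤ dG.d v (γ t) := fun t => ht₀ t (Finset.mem_univ t)
  have hmD : 2 * N ≤ m := hfar t₀
  set T0 := (t₀ : ℕ) with hT0def
  have hT0 : T0 < n + 1 := t₀.isLt
  -- key lower bound on distances from the basepoint
  have key : ∀ t : Fin (n + 1), (1 / c) * |((t : ℕ) : ℝ) - (T0 : ℝ)| - c - m
      ≤ (dG.d v (γ t) : ℝ) := by
    intro t
    have h1 := (hγ.2 t t₀).1
    have h2 : dG.d (γ t) (γ t₀) ≤ dG.d (γ t) v + dG.d v (γ t₀) := dG.d_tri _ _ _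
    have h3 : dG.d (γ t) v = dG.d v (γ t) := dG.d_symm _ _
    rw [h3] at h2
    have h4 : (dG.d (γ t) (γ t₀) : ℝ) ≤ (dG.d v (γ t) : ℝ) + (m : ℝ) := by
      rw [hm]; exact_mod_cast h2
    linarith
  set B : ℕ → ℕ := fun j => max m ⌈(j : ℝ) / c - c - m⌉₊ with hB
  have hBm : ∀ j, m ≤ B j := fun j => le_max_left _ _
  have hBmono : Monotone B := by
    intro a b hab
    refine max_le_max le_rfl (Nat.ceil_mono ?_)
    have : (a : ℝ) / c ≤ (b : ℝ) / c := by
      apply (div_le_div_iff_of_pos_right hc).2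
      exact_mod_cast hab
    linarith
  have hBle : ∀ (e : Fin (n + 1)) (j : ℕ), (j : ℝ) ≤ |((e : ℕ) : ℝ) - (T0 : ℝ)| →
      B j ≤ dG.d v (γ e) := by
    intro e j hj
    refine max_le (hmin e) (Nat.ceil_le.2 ?_)
    have h1 := key e
    have h2 : (j : ℝ) / c ≤ |((e : ℕ) : ℝ) - (T0 : ℝ)| / c :=
      (div_le_div_iff_of_pos_right hc).2 hj
    have h3 : (1 / c) * |((e : ℕ) : ℝ) - (T0 : ℝ)| = |((e : ℕ) : ℝ) - (T0 : ℝ)| / c := by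
      ring
    linarith
  -- per-edge bound
  have hedge : ∀ i : Fin n,
      f (min (dG.d v (γ i.castSucc)) (dG.d v (γ i.succ))) ≤
        if T0 ≤ (i : ℕ) then f (B ((i : ℕ) - T0)) else f (B (T0 - ((i : ℕ) + 1))) := by
    intro i
    by_cases h : T0 ≤ (i : ℕ)
    · rw [if_pos h]
      refine hanti (le_min (hBle i.castSucc _ ?_) (hBle i.succ _ ?_))
      · have h1 : ((i.castSucc : ℕ) : ℝ) = ((i : ℕ) : ℝ) := by simp
        rw [h1, Nat.cast_sub h, abs_of_nonneg (by
          have := (Nat.cast_le (α := ℝ)).2 h; linarith)]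
      · have h1 : ((i.succ : ℕ) : ℝ) = ((i : ℕ) : ℝ) + 1 := by simp
        rw [h1, Nat.cast_sub h, abs_of_nonneg (by
          have := (Nat.cast_le (α := ℝ)).2 h; linarith)]
        have := (Nat.cast_le (α := ℝ)).2 h; linarith
    · rw [if_neg h]
      push_neg at h
      have h' : (i : ℕ) + 1 ≤ T0 := h
      refine hanti (le_min (hBle i.castSucc _ ?_) (hBle i.succ _ ?_))
      · have h1 : ((i.castSucc : ℕ) : ℝ) = ((i : ℕ) : ℝ) := by simp
        rw [h1, Nat.cast_sub h', abs_sub_comm, abs_of_nonneg (by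
          have := (Nat.cast_le (α := ℝ)).2 h'; push_cast at this ⊢; linarith)]
        have := (Nat.cast_le (α := ℝ)).2 h'; push_cast at this ⊢; linarith
      · have h1 : ((i.succ : ℕ) : ℝ) = ((i : ℕ) : ℝ) + 1 := by simp
        rw [h1, Nat.cast_sub h', abs_sub_comm, abs_of_nonneg (by
          have := (Nat.cast_le (α := ℝ)).2 h'; push_cast at this ⊢; linarith)]
        have := (Nat.cast_le (α := ℝ)).2 h'; push_cast at this ⊢; linarith
  have hstep1 : dG.floydLen f v γ ≤
      ∑ i : Fin n, (if T0 ≤ (i : ℕ) then f (B ((i : ℕ) - T0)) else f (B (T0 - ((i : ℕ) + 1)))) :=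
    Finset.sum_le_sum (fun i _ => hedge i)
  rw [Finset.sum_ite] at hstep1
  have hSnn : ∀ j : ℕ, 0 ≤ f (B j) := fun j => hf0' _
  have hP : ∑ i ∈ Finset.univ.filter (fun i : Fin n => T0 ≤ (i : ℕ)), f (B ((i : ℕ) - T0))
      ≤ ∑ j ∈ Finset.range (n + 1), f (B j) := by
    have hinj : ∀ x ∈ Finset.univ.filter (fun i : Fin n => T0 ≤ (i : ℕ)),
        ∀ y ∈ Finset.univ.filter (fun i : Fin n => T0 ≤ (i : ℕ)),
        (x : ℕ) - T0 = (y : ℕ) - T0 → x = y := by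
      intro x hx y hy hxy
      have hx' := (Finset.mem_filter.1 hx).2
      have hy' := (Finset.mem_filter.1 hy).2
      exact Fin.ext (by omega)
    have heq : ∑ j ∈ (Finset.univ.filter (fun i : Fin n => T0 ≤ (i : ℕ))).image
          (fun i : Fin n => (i : ℕ) - T0), f (B j)
        = ∑ i ∈ Finset.univ.filter (fun i : Fin n => T0 ≤ (i : ℕ)), f (B ((i : ℕ) - T0)) :=
      Finset.sum_image hinj
    rw [← heq]
    refine Finset.sum_le_sum_of_subset_of_nonneg ?_ (fun j _ _ => hSnn j)
    intro j hj
    obtain ⟨i, hi, rfl⟩ := Finset.mem_image.1 hj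
    exact Finset.mem_range.2 (by have := i.isLt; omega)
  have hQ : ∑ i ∈ Finset.univ.filter (fun i : Fin n => ¬ T0 ≤ (i : ℕ)),
      f (B (T0 - ((i : ℕ) + 1))) ≤ ∑ j ∈ Finset.range (n + 1), f (B j) := by
    have hinj : ∀ x ∈ Finset.univ.filter (fun i : Fin n => ¬ T0 ≤ (i : ℕ)),
        ∀ y ∈ Finset.univ.filter (fun i : Fin n => ¬ T0 ≤ (i : ℕ)),
        T0 - ((x : ℕ) + 1) = T0 - ((y : ℕ) + 1) → x = y := by
      intro x hx y hy hxy
      have hx' := (Finset.mem_filter.1 hx).2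
      have hy' := (Finset.mem_filter.1 hy).2
      push_neg at hx' hy'
      exact Fin.ext (by omega)
    have heq : ∑ j ∈ (Finset.univ.filter (fun i : Fin n => ¬ T0 ≤ (i : ℕ))).image
          (fun i : Fin n => T0 - ((i : ℕ) + 1)), f (B j)
        = ∑ i ∈ Finset.univ.filter (fun i : Fin n => ¬ T0 ≤ (i : ℕ)), f (B (T0 - ((i : ℕ) + 1))) :=
      Finset.sum_image hinj
    rw [← heq]
    refine Finset.sum_le_sum_of_subset_of_nonneg ?_ (fun j _ _ => hSnn j)
    intro j hj
    obtain ⟨i, hi, rfl⟩ := Finset.mem_image.1 hj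
    exact Finset.mem_range.2 (by omega)
  -- bound the model sum over range (n+1)
  set z : ℝ := c * (2 * m + c) with hz
  have hzpos : 0 ≤ z := by positivity
  have hNear : ∑ j ∈ (Finset.range (n + 1)).filter (fun j : ℕ => (j : ℝ) ≤ z), f (B j)
      ≤ (z + 1) * f m := by
    have h2 := Finset.sum_le_card_nsmul ((Finset.range (n + 1)).filter (fun j : ℕ => (j : ℝ) ≤ z))
      (fun j => f (B j)) (f m) (fun j _ => hanti (hBm j))
    have h3 : ((Finset.range (n + 1)).filter (fun j : ℕ => (j : ℝ) ≤ z)).card ≤ ⌊z⌋₊ + 1 := by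
      have hsub : (Finset.range (n + 1)).filter (fun j : ℕ => (j : ℝ) ≤ z)
          ⊆ Finset.range (⌊z⌋₊ + 1) := by
        intro j hj
        have := (Finset.mem_filter.1 hj).2
        exact Finset.mem_range.2 (Nat.lt_succ_of_le (Nat.le_floor this))
      simpa using Finset.card_le_card hsub
    calc ∑ j ∈ (Finset.range (n + 1)).filter (fun j : ℕ => (j : ℝ) ≤ z), f (B j)
        ≤ ((Finset.range (n + 1)).filter (fun j : ℕ => (j : ℝ) ≤ z)).card • f m := h2
      _ = (((Finset.range (n + 1)).filter (fun j : ℕ => (j : ℝ) ≤ z)).card : ℝ) * f m :=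
          nsmul_eq_mul _ _
      _ ≤ (z + 1) * f m := by
          refine mul_le_mul_of_nonneg_right ?_ (hf0' m)
          calc (((Finset.range (n + 1)).filter (fun j : ℕ => (j : ℝ) ≤ z)).card : ℝ)
              ≤ ((⌊z⌋₊ + 1 : ℕ) : ℝ) := Nat.cast_le.2 h3
            _ ≤ z + 1 := by push_cast; have := Nat.floor_le hzpos; linarith
  have hFar : ∑ j ∈ (Finset.range (n + 1)).filter (fun j : ℕ => ¬ (j : ℝ) ≤ z), f (B j)
      ≤ (c + 1) * tailS f (m + 1) := by
    set Far := (Finset.range (n + 1)).filter (fun j : ℕ => ¬ (j : ℝ) ≤ z) with hFarDef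
    have hfarv : ∀ j ∈ Far, m + 1 ≤ B j ∧ B j = ⌈(j : ℝ) / c - c - m⌉₊ := by
      intro j hj
      have hzj : z < (j : ℝ) := not_le.1 (Finset.mem_filter.1 hj).2
      have h3 : (2 * (m : ℝ) + c) < (j : ℝ) / c := by
        rw [lt_div_iff₀ hc]; nlinarith [hzj]
      have h2 : (m : ℝ) < (j : ℝ) / c - c - m := by linarith
      have h4 : m < ⌈(j : ℝ) / c - c - (m : ℝ)⌉₊ := Nat.lt_ceil.2 h2
      constructor
      · have := le_max_right m ⌈(j : ℝ) / c - c - (m : ℝ)⌉₊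
        simp only [hB]; omega
      · simp only [hB]; exact max_eq_right h4.le
    rw [Finset.sum_comp (fun v => f v) B]
    have hcard : ∀ v ∈ Far.image B, (((Far.filter fun j => B j = v)).card : ℝ) ≤ c + 1 := by
      intro v hv
      obtain ⟨j₀, hj₀, hj₀v⟩ := Finset.mem_image.1 hv
      have hv1 : m + 1 ≤ v := hj₀v ▸ (hfarv j₀ hj₀).1
      have hv0 : v ≠ 0 := by omega
      have hvR : (1 : ℝ) ≤ (v : ℝ) := by exact_mod_cast Nat.one_le_iff_ne_zero.2 hv0
      have hnn1 : (0 : ℝ) ≤ c * ((v : ℝ) - 1 + c + m) := by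
        apply mul_nonneg hc.le; have : (0:ℝ) ≤ (m:ℝ) := Nat.cast_nonneg m; linarith
      have hnn2 : (0 : ℝ) ≤ c * ((v : ℝ) + c + m) := by
        apply mul_nonneg hc.le; have : (0:ℝ) ≤ (m:ℝ) := Nat.cast_nonneg m; linarith
      have hsub : Far.filter (fun j => B j = v) ⊆
          Finset.Ioc ⌊c * ((v : ℝ) - 1 + c + m)⌋₊ ⌊c * ((v : ℝ) + c + m)⌋₊ := by
        intro j hj
        obtain ⟨hjF, hjv⟩ := Finset.mem_filter.1 hj
        obtain ⟨h1, hBj⟩ := hfarv j hjF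
        have hceil : ⌈(j : ℝ) / c - c - (m : ℝ)⌉₊ = v := by rw [← hBj]; exact hjv
        obtain ⟨hlo, hhi⟩ := (Nat.ceil_eq_iff hv0).1 hceil
        have hcast : ((v - 1 : ℕ) : ℝ) = (v : ℝ) - 1 := by
          have : 1 ≤ v := by omega
          push_cast [this]; ring
        rw [hcast] at hlo
        refine Finset.mem_Ioc.2 ⟨?_, ?_⟩
        · have h2 : c * ((v : ℝ) - 1 + c + m) < (j : ℝ) := by
            have h3 : (v : ℝ) - 1 + c + m < (j : ℝ) / c := by linarith
            have h4 : c * ((v : ℝ) - 1 + c + m) < c * ((j : ℝ) / c) :=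
              mul_lt_mul_of_pos_left h3 hc
            have h5 : c * ((j : ℝ) / c) = (j : ℝ) := by field_simp
            linarith
          exact (Nat.floor_lt hnn1).2 h2
        · refine Nat.le_floor ?_
          have h4 : (j : ℝ) / c ≤ (v : ℝ) + c + m := by linarith
          have h5 : c * ((j : ℝ) / c) ≤ c * ((v : ℝ) + c + m) :=
            mul_le_mul_of_nonneg_left h4 hc.le
          have h6 : c * ((j : ℝ) / c) = (j : ℝ) := by field_simp
          linarith
      have hcard2 := Finset.card_le_card hsub
      rw [Nat.card_Ioc] at hcard2
      have hb : (⌊c * ((v : ℝ) + c + m)⌋₊ : ℝ) ≤ c * ((v : ℝ) + c + m) := Nat.floor_le hnn2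
      have ha : c * ((v : ℝ) - 1 + c + m) < (⌊c * ((v : ℝ) - 1 + c + m)⌋₊ : ℝ) + 1 :=
        Nat.lt_floor_add_one _
      rcases le_or_gt ⌊c * ((v : ℝ) - 1 + c + m)⌋₊ ⌊c * ((v : ℝ) + c + m)⌋₊ with hab | hab
      · calc (((Far.filter fun j => B j = v)).card : ℝ)
            ≤ ((⌊c * ((v : ℝ) + c + m)⌋₊ - ⌊c * ((v : ℝ) - 1 + c + m)⌋₊ : ℕ) : ℝ) :=
              Nat.cast_le.2 hcard2
          _ = (⌊c * ((v : ℝ) + c + m)⌋₊ : ℝ) - (⌊c * ((v : ℝ) - 1 + c + m)⌋₊ : ℝ) := by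
              push_cast [hab]; ring
          _ ≤ c + 1 := by nlinarith [hb, ha]
      · have h0 : (Far.filter fun j => B j = v).card = 0 := by omega
        rw [h0]; push_cast; linarith
    have himage : Far.image B ⊆ Finset.Icc (m + 1) (B n) := by
      intro v hv
      obtain ⟨j, hj, rfl⟩ := Finset.mem_image.1 hv
      refine Finset.mem_Icc.2 ⟨(hfarv j hj).1, hBmono ?_⟩
      have := Finset.mem_range.1 (Finset.mem_filter.1 hj).1
      omega
    calc ∑ v ∈ Far.image B, ((Far.filter fun j => B j = v)).card • f v
        ≤ ∑ v ∈ Far.image B, (c + 1) * f v := by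
          refine Finset.sum_le_sum fun v hv => ?_
          rw [nsmul_eq_mul]
          exact mul_le_mul_of_nonneg_right (hcard v hv) (hf0' v)
      _ = (c + 1) * ∑ v ∈ Far.image B, f v := (Finset.mul_sum _ _ _).symm
      _ ≤ (c + 1) * tailS f (m + 1) := by
          refine mul_le_mul_of_nonneg_left ?_ (by linarith)
          calc ∑ v ∈ Far.image B, f v ≤ ∑ v ∈ Finset.Icc (m + 1) (B n), f v :=
                Finset.sum_le_sum_of_subset_of_nonneg himage (fun v _ _ => hf0' v)
            _ ≤ tailS f (m + 1) := sum_Icc_le_tailS hf0' hfs _ _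
  have hrange : ∑ j ∈ Finset.range (n + 1), f (B j) ≤ (z + 1) * f m + (c + 1) * tailS f (m + 1) := by
    rw [← Finset.sum_filter_add_sum_filter_not (Finset.range (n + 1)) (fun j : ℕ => (j : ℝ) ≤ z)]
    exact add_le_add hNear hFar
  -- combine
  set T : ℝ := tailS f (m / 2) with hT
  have hmf : (m : ℝ) * f m ≤ 2 * T := mul_le_two_tailS hf0' hanti hfs m
  have ht1 : tailS f m ≤ T := tailS_anti hfa hfs (Nat.div_le_self m 2)
  have ht2 : tailS f (m + 1) ≤ T := tailS_anti hfa hfs (by omega)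
  have hfm : f m ≤ T := le_trans (le_tailS hf0' hfs m) ht1
  have htail0 : 0 ≤ T := tailS_nonneg hf0' _
  have hNle : T ≤ tailS f N := tailS_anti hfa hfs (by omega)
  have hfinal : dG.floydLen f v γ ≤ C * T := by
    have h1 : dG.floydLen f v γ ≤ 2 * ((z + 1) * f m + (c + 1) * tailS f (m + 1)) := by
      have := add_le_add hP hQ
      linarith [hstep1, hrange]
    have e3 : 4 * c * ((m : ℝ) * f m) ≤ 4 * c * (2 * T) :=
      mul_le_mul_of_nonneg_left hmf (by positivity)
    have e4 : (2 * c ^ 2 + 2) * f m ≤ (2 * c ^ 2 + 2) * T :=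
      mul_le_mul_of_nonneg_left hfm (by positivity)
    have e6 : (2 * c + 2) * tailS f (m + 1) ≤ (2 * c + 2) * T :=
      mul_le_mul_of_nonneg_left ht2 (by positivity)
    have e7 : 2 * ((z + 1) * f m + (c + 1) * tailS f (m + 1)) =
        4 * c * ((m : ℝ) * f m) + (2 * c ^ 2 + 2) * f m + (2 * c + 2) * tailS f (m + 1) := by
      rw [hz]; ring
    rw [e7] at h1
    have : 4 * c * (2 * T) + (2 * c ^ 2 + 2) * T + (2 * c + 2) * T = C * T := by
      rw [hC]; ring
    linarith
  have hlast : C * T < ε := by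
    have h2 : C * tailS f N < ε := (lt_div_iff₀' hCpos).1 hN
    have h1 : C * T ≤ C * tailS f N := mul_le_mul_of_nonneg_left hNle hCpos.le
    linarith
  linarith

end Karlsson

/-- the Main Lemma: let `G` be a finitely generated group (with
left-invariant locally finite Cayley graph metric `dG`) acting
3-discontinuously and 2-cocompactly on the metrizable compactum
`T̃ = Λ(G) ⊔ G` (the attractor sum), where `G` sits in `T̃` as the open
discrete orbit of the basepoint `o`, and the (shortcut) metric of `T̃` is
dominated on `G` by the Floyd metric. Then for every `c > 0` and every
`M ⊆ T̃`, the closures of `M` and of its `c`-quasigeodesic hull meet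
`T = T̃ ∖ G·o` in the same set. -/
theorem stmt16 {G Tt : Type} [Group G]
    [MetricSpace Tt] [CompactSpace Tt] [MulAction G Tt]
    (hcont : ∀ g : G, Continuous (fun x : Tt => g • x))
    (h3 : ThreeDiscontinuous G Tt) (h2 : TwoCocompact G Tt)
    (o : Tt) (hinj : Function.Injective (fun g : G => g • o))
    (hopen : ∀ g : G, IsOpen ({g • o} : Set Tt))
    (dG : GraphDist G)
    (hinv : ∀ g x y : G, dG.d (g * x) (g * y) = dG.d x y)
    (f : ℕ → ℝ) (K : ℝ) (hK : 0 < K) (hf : IsFloydFunction f K)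
    (hcomp : ∀ g h : G, dist (g • o) (h • o) ≤ dG.floydDist f 1 g h)
    (c : ℝ) (hc : 0 < c) (M : Set Tt) :
    {x : Tt | ∀ g : G, x ≠ g • o} ∩ closure M =
      {x : Tt | ∀ g : G, x ≠ g • o} ∩ closure (qHull dG o c M) := by
  classical
  have hf0 : ∀ n, 0 < f n := hf.1
  have hfa : ∀ n, f (n + 1) ≤ f n := by
    intro n
    have h1 := (hf.2.1 n).1
    have h2 := hf0 (n + 1)
    rw [le_div_iff₀ h2] at h1
    linarith
  have hfs : Summable f := hf.2.2
  have hf0' : ∀ n, 0 ≤ f n := fun n => (hf0 n).le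
  ext x
  simp only [Set.mem_inter_iff, Set.mem_setOf_eq]
  constructor
  · rintro ⟨hxT, hxM⟩
    refine ⟨hxT, closure_mono (fun z hz => ?_) hxM⟩
    simp only [qHull, Set.mem_union]
    exact Or.inl (Or.inl (Or.inl hz))
  · rintro ⟨hxT, hxH⟩
    refine ⟨hxT, ?_⟩
    rw [Metric.mem_closure_iff]
    intro ε hε
    obtain ⟨D, hD⟩ := karlsson dG 1 f hf0 hfa hfs c hc (ε / 2) (by linarith)
    set N₀ : ℕ := ⌈(D : ℝ) + (c * (c * (2 * D + c)) + c)⌉₊ with hN₀def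
    have hN₀R : (D : ℝ) + (c * (c * (2 * D + c)) + c) ≤ (N₀ : ℝ) := Nat.le_ceil _
    obtain ⟨r, hr0, hr⟩ : ∃ r > 0, ∀ g : G, dG.d 1 g ≤ N₀ → r ≤ dist x (g • o) := by
      set F := (dG.locallyFinite 1 N₀).toFinset with hF
      by_cases hFe : F.Nonempty
      · refine ⟨(F.image fun g => dist x (g • o)).min' (hFe.image _), ?_, ?_⟩
        · obtain ⟨g, hg, hgx⟩ := Finset.mem_image.1
            ((F.image fun g => dist x (g • o)).min'_mem (hFe.image _))
          rw [← hgx]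
          exact dist_pos.2 (hxT g)
        · intro g hg
          refine Finset.min'_le _ _ (Finset.mem_image_of_mem _ ?_)
          rw [hF, Set.Finite.mem_toFinset]
          exact hg
      · refine ⟨1, one_pos, fun g hg => absurd ⟨g, ?_⟩ hFe⟩
        rw [hF, Set.Finite.mem_toFinset]
        exact hg
    set ρ := min (ε / 2) r with hρdef
    have hρ0 : 0 < ρ := lt_min (by linarith) hr0
    have hρε : ρ ≤ ε / 2 := min_le_left _ _
    obtain ⟨y, hyH, hxy⟩ := Metric.mem_closure_iff.1 hxH ρ hρ0
    have hbig : ∀ g : G, dist x (g • o) < ρ → N₀ < dG.d 1 g := by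
      intro g h
      by_contra hle
      push_neg at hle
      have h2 := hr g hle
      have h3 : ρ ≤ dist x (g • o) := le_trans (min_le_right _ _) h2
      linarith
    have hkey : ∀ (p : ℕ) (θ : Fin (p + 1) → G), dG.IsQuasigeodesic c θ →
        (∀ k, D ≤ dG.d 1 (θ k)) → dist (θ 0 • o) (θ (Fin.last p) • o) ≤ ε / 2 := by
      intro p θ hθ hpts
      calc dist (θ 0 • o) (θ (Fin.last p) • o) ≤ dG.floydDist f 1 (θ 0) (θ (Fin.last p)) :=
            hcomp _ _
        _ ≤ dG.floydLen f 1 θ := floydDist_le_floydLen dG hf0' 1 θ hθ.1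
        _ ≤ ε / 2 := hD p θ hθ hpts
    simp only [qHull, Set.mem_union, Set.mem_setOf_eq] at hyH
    rcases hyH with ((hyM | hyFin) | hyRay) | hyLine
    · exact ⟨y, hyM, by linarith [hxy, hρε]⟩
    -- ================= finite quasigeodesic case =================
    · obtain ⟨n, γ, hγ, hM0, hMn, i, rfl⟩ := hyFin
      have hdi : N₀ < dG.d 1 (γ i) := hbig _ hxy
      have hin : (i : ℕ) < n + 1 := i.isLt
      have hdich : (∀ s : Fin (n + 1), (s : ℕ) ≤ (i : ℕ) → D + 1 ≤ dG.d 1 (γ s)) ∨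
          (∀ t : Fin (n + 1), (i : ℕ) ≤ (t : ℕ) → D + 1 ≤ dG.d 1 (γ t)) := by
        by_contra hcon
        push_neg at hcon
        obtain ⟨⟨s, hsi, hs⟩, ⟨t, hti, ht⟩⟩ := hcon
        have hsD : (dG.d 1 (γ s) : ℝ) ≤ D := by exact_mod_cast Nat.lt_succ_iff.1 hs
        have htD : (dG.d 1 (γ t) : ℝ) ≤ D := by exact_mod_cast Nat.lt_succ_iff.1 ht
        have h1 : (dG.d (γ s) (γ t) : ℝ) ≤ 2 * D := by
          have h2 : dG.d (γ s) (γ t) ≤ dG.d (γ s) 1 + dG.d 1 (γ t) := dG.d_tri _ _ _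
          rw [dG.d_symm (γ s) 1] at h2
          have h4 : (dG.d (γ s) (γ t) : ℝ) ≤ (dG.d 1 (γ s) : ℝ) + (dG.d 1 (γ t) : ℝ) := by
            exact_mod_cast h2
          linarith
        have h5 := (hγ.2 s t).1
        have hX : |((s : ℕ) : ℝ) - ((t : ℕ) : ℝ)| ≤ c * (2 * D + c) := by
          have h6 : (1 / c) * |((s : ℕ) : ℝ) - ((t : ℕ) : ℝ)| ≤ 2 * D + c := by linarith
          have h7 := mul_le_mul_of_nonneg_left h6 hc.le
          have h8 : c * ((1 / c) * |((s : ℕ) : ℝ) - ((t : ℕ) : ℝ)|)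
              = |((s : ℕ) : ℝ) - ((t : ℕ) : ℝ)| := by field_simp
          linarith
        have hsr : ((s : ℕ) : ℝ) ≤ ((i : ℕ) : ℝ) := by exact_mod_cast hsi
        have htr : ((i : ℕ) : ℝ) ≤ ((t : ℕ) : ℝ) := by exact_mod_cast hti
        have hXi : |((s : ℕ) : ℝ) - ((i : ℕ) : ℝ)| ≤ c * (2 * D + c) := by
          have h9 : |((s : ℕ) : ℝ) - ((i : ℕ) : ℝ)| = ((i : ℕ) : ℝ) - ((s : ℕ) : ℝ) := by
            rw [abs_sub_comm]; exact abs_of_nonneg (by linarith)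
          have h10 : |((s : ℕ) : ℝ) - ((t : ℕ) : ℝ)| = ((t : ℕ) : ℝ) - ((s : ℕ) : ℝ) := by
            rw [abs_sub_comm]; exact abs_of_nonneg (by linarith)
          rw [h9]; rw [h10] at hX; linarith
        have h11 := (hγ.2 s i).2
        have h12 : (dG.d 1 (γ i) : ℝ) ≤ (dG.d 1 (γ s) : ℝ) + (dG.d (γ s) (γ i) : ℝ) := by
          exact_mod_cast dG.d_tri 1 (γ s) (γ i)
        have h14 : (dG.d (γ s) (γ i) : ℝ) ≤ c * (c * (2 * D + c)) + c := by
          have h15 := mul_le_mul_of_nonneg_left hXi hc.le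
          linarith
        have h16 : ((N₀ : ℕ) : ℝ) < (dG.d 1 (γ i) : ℝ) := by exact_mod_cast hdi
        linarith
      rcases hdich with hside | hside
      · -- towards γ 0
        set p := (i : ℕ) with hpdef
        set θ : Fin (p + 1) → G := fun k => γ ⟨p - (k : ℕ), by omega⟩ with hθdef
        have hθq : dG.IsQuasigeodesic c θ := by
          constructor
          · intro k
            have hk : (k : ℕ) < p := k.isLt
            have e1 : θ k.castSucc = γ ((⟨p - ((k : ℕ) + 1), by omega⟩ : Fin n).succ) := by
              simp only [hθdef]
              try congr 1
              try apply Fin.ext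
              try simp only [Fin.coe_castSucc, Fin.val_succ]
              try omega
            have e2 : θ k.succ = γ ((⟨p - ((k : ℕ) + 1), by omega⟩ : Fin n).castSucc) := by
              simp only [hθdef]
              try congr 1
              try apply Fin.ext
              try simp only [Fin.val_succ, Fin.coe_castSucc]
              try omega
            rw [e1, e2, dG.d_symm]
            exact hγ.1 _
          · intro s t
            have hs' : (s : ℕ) ≤ p := by have := s.isLt; omega
            have ht' : (t : ℕ) ≤ p := by have := t.isLt; omega
            have h := hγ.2 ⟨p - (s : ℕ), by omega⟩ ⟨p - (t : ℕ), by omega⟩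
            have habs : |((p - (s : ℕ) : ℕ) : ℝ) - ((p - (t : ℕ) : ℕ) : ℝ)|
                = |((s : ℕ) : ℝ) - ((t : ℕ) : ℝ)| := by
              rw [Nat.cast_sub hs', Nat.cast_sub ht',
                show (p : ℝ) - ((s : ℕ) : ℝ) - ((p : ℝ) - ((t : ℕ) : ℝ))
                  = ((t : ℕ) : ℝ) - ((s : ℕ) : ℝ) from by ring]
              exact abs_sub_comm _ _
            constructor
            · have h1 : (1 / c) * |((p - (s : ℕ) : ℕ) : ℝ) - ((p - (t : ℕ) : ℕ) : ℝ)| - c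
                  ≤ (dG.d (θ s) (θ t) : ℝ) := h.1
              rw [habs] at h1; exact h1
            · have h2 : (dG.d (θ s) (θ t) : ℝ)
                  ≤ c * |((p - (s : ℕ) : ℕ) : ℝ) - ((p - (t : ℕ) : ℕ) : ℝ)| + c := h.2
              rw [habs] at h2; exact h2
        have hθpts : ∀ k : Fin (p + 1), D ≤ dG.d 1 (θ k) := by
          intro k
          have h1 : D + 1 ≤ dG.d 1 (γ ⟨p - (k : ℕ), by omega⟩) := by
            refine hside _ ?_
            show p - (k : ℕ) ≤ (i : ℕ)
            try omega
          have h2 : D + 1 ≤ dG.d 1 (θ k) := by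
            simp only [hθdef]
            exact h1
          try omega
        have hd := hkey p θ hθq hθpts
        have he0 : θ 0 = γ i := by
          simp only [hθdef]
          try congr 1
          try apply Fin.ext
          try simp only [Fin.val_zero]
          try omega
        have hel : θ (Fin.last p) = γ 0 := by
          simp only [hθdef]
          try congr 1
          try apply Fin.ext
          try simp only [Fin.val_last, Fin.val_zero]
          try omega
        rw [he0, hel] at hd
        exact ⟨γ 0 • o, hM0, by linarith [dist_triangle x (γ i • o) (γ 0 • o)]⟩
      · -- towards γ (Fin.last n)
        set p := n - (i : ℕ) with hpdef
        set θ : Fin (p + 1) → G := fun k => γ ⟨(i : ℕ) + (k : ℕ), by omega⟩ with hθdef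
        have hθq : dG.IsQuasigeodesic c θ := by
          constructor
          · intro k
            have hk : (k : ℕ) < p := k.isLt
            have e1 : θ k.castSucc = γ ((⟨(i : ℕ) + (k : ℕ), by omega⟩ : Fin n).castSucc) := by
              simp only [hθdef]
              try congr 1
              try apply Fin.ext
              try simp only [Fin.coe_castSucc]
            have e2 : θ k.succ = γ ((⟨(i : ℕ) + (k : ℕ), by omega⟩ : Fin n).succ) := by
              simp only [hθdef]
              try congr 1
              try apply Fin.ext
              try simp only [Fin.val_succ]
              try omega
            rw [e1, e2]
            exact hγ.1 _
          · intro s t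
            have h := hγ.2 ⟨(i : ℕ) + (s : ℕ), by omega⟩ ⟨(i : ℕ) + (t : ℕ), by omega⟩
            have habs : |(((i : ℕ) + (s : ℕ) : ℕ) : ℝ) - (((i : ℕ) + (t : ℕ) : ℕ) : ℝ)|
                = |((s : ℕ) : ℝ) - ((t : ℕ) : ℝ)| := by
              try push_cast
              rw [show ((i : ℕ) : ℝ) + ((s : ℕ) : ℝ) - (((i : ℕ) : ℝ) + ((t : ℕ) : ℝ))
                = ((s : ℕ) : ℝ) - ((t : ℕ) : ℝ) from by ring]
            constructor
            · have h1 : (1 / c) * |(((i : ℕ) + (s : ℕ) : ℕ) : ℝ) - (((i : ℕ) + (t : ℕ) : ℕ) : ℝ)| - c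
                  ≤ (dG.d (θ s) (θ t) : ℝ) := h.1
              rw [habs] at h1; exact h1
            · have h2 : (dG.d (θ s) (θ t) : ℝ)
                  ≤ c * |(((i : ℕ) + (s : ℕ) : ℕ) : ℝ) - (((i : ℕ) + (t : ℕ) : ℕ) : ℝ)| + c := h.2
              rw [habs] at h2; exact h2
        have hθpts : ∀ k : Fin (p + 1), D ≤ dG.d 1 (θ k) := by
          intro k
          have h1 : D + 1 ≤ dG.d 1 (γ ⟨(i : ℕ) + (k : ℕ), by omega⟩) := by
            refine hside _ ?_
            show (i : ℕ) ≤ (i : ℕ) + (k : ℕ)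
            try omega
          have h2 : D + 1 ≤ dG.d 1 (θ k) := by
            simp only [hθdef]
            exact h1
          try omega
        have hd := hkey p θ hθq hθpts
        have he0 : θ 0 = γ i := by
          simp only [hθdef]
          try congr 1
          try apply Fin.ext
          try simp only [Fin.val_zero]
          try omega
        have hel : θ (Fin.last p) = γ (Fin.last n) := by
          simp only [hθdef]
          try congr 1
          try apply Fin.ext
          try simp only [Fin.val_last]
          try omega
        rw [he0, hel] at hd
        exact ⟨γ (Fin.last n) • o, hMn, by linarith [dist_triangle x (γ i • o) (γ (Fin.last n) • o)]⟩
    -- ================= ray case =================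
    · obtain ⟨γ, hγ, hM0, ⟨q, hqM, hq⟩, i, rfl⟩ := hyRay
      have hdi : N₀ < dG.d 1 (γ i) := hbig _ hxy
      have hdich : (∀ s : ℕ, s ≤ i → D + 1 ≤ dG.d 1 (γ s)) ∨
          (∀ t : ℕ, i ≤ t → D + 1 ≤ dG.d 1 (γ t)) := by
        by_contra hcon
        push_neg at hcon
        obtain ⟨⟨s, hsi, hs⟩, ⟨t, hti, ht⟩⟩ := hcon
        have hsD : (dG.d 1 (γ s) : ℝ) ≤ D := by exact_mod_cast Nat.lt_succ_iff.1 hs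
        have htD : (dG.d 1 (γ t) : ℝ) ≤ D := by exact_mod_cast Nat.lt_succ_iff.1 ht
        have h1 : (dG.d (γ s) (γ t) : ℝ) ≤ 2 * D := by
          have h2 : dG.d (γ s) (γ t) ≤ dG.d (γ s) 1 + dG.d 1 (γ t) := dG.d_tri _ _ _
          rw [dG.d_symm (γ s) 1] at h2
          have h4 : (dG.d (γ s) (γ t) : ℝ) ≤ (dG.d 1 (γ s) : ℝ) + (dG.d 1 (γ t) : ℝ) := by
            exact_mod_cast h2
          linarith
        have h5 := (hγ.2 s t).1
        have hX : |(s : ℝ) - (t : ℝ)| ≤ c * (2 * D + c) := by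
          have h6 : (1 / c) * |(s : ℝ) - (t : ℝ)| ≤ 2 * D + c := by linarith
          have h7 := mul_le_mul_of_nonneg_left h6 hc.le
          have h8 : c * ((1 / c) * |(s : ℝ) - (t : ℝ)|) = |(s : ℝ) - (t : ℝ)| := by field_simp
          linarith
        have hsr : (s : ℝ) ≤ (i : ℝ) := by exact_mod_cast hsi
        have htr : (i : ℝ) ≤ (t : ℝ) := by exact_mod_cast hti
        have hXi : |(s : ℝ) - (i : ℝ)| ≤ c * (2 * D + c) := by
          have h9 : |(s : ℝ) - (i : ℝ)| = (i : ℝ) - (s : ℝ) := by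
            rw [abs_sub_comm]; exact abs_of_nonneg (by linarith)
          have h10 : |(s : ℝ) - (t : ℝ)| = (t : ℝ) - (s : ℝ) := by
            rw [abs_sub_comm]; exact abs_of_nonneg (by linarith)
          rw [h9]; rw [h10] at hX; linarith
        have h11 := (hγ.2 s i).2
        have h12 : (dG.d 1 (γ i) : ℝ) ≤ (dG.d 1 (γ s) : ℝ) + (dG.d (γ s) (γ i) : ℝ) := by
          exact_mod_cast dG.d_tri 1 (γ s) (γ i)
        have h14 : (dG.d (γ s) (γ i) : ℝ) ≤ c * (c * (2 * D + c)) + c := by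
          have h15 := mul_le_mul_of_nonneg_left hXi hc.le
          linarith
        have h16 : ((N₀ : ℕ) : ℝ) < (dG.d 1 (γ i) : ℝ) := by exact_mod_cast hdi
        linarith
      rcases hdich with hside | hside
      · -- towards γ 0
        set θ : Fin (i + 1) → G := fun k => γ (i - (k : ℕ)) with hθdef
        have hθq : dG.IsQuasigeodesic c θ := by
          constructor
          · intro k
            have hk : (k : ℕ) < i := k.isLt
            have e1 : θ k.castSucc = γ ((i - ((k : ℕ) + 1)) + 1) := by
              simp only [hθdef]
              try congr 1
              try simp only [Fin.coe_castSucc]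
              try omega
            have e2 : θ k.succ = γ (i - ((k : ℕ) + 1)) := by
              simp only [hθdef]
              try congr 1
              try simp only [Fin.val_succ]
            rw [e1, e2, dG.d_symm]
            exact hγ.1 _
          · intro s t
            have hs' : (s : ℕ) ≤ i := by have := s.isLt; omega
            have ht' : (t : ℕ) ≤ i := by have := t.isLt; omega
            have h := hγ.2 (i - (s : ℕ)) (i - (t : ℕ))
            have habs : |((i - (s : ℕ) : ℕ) : ℝ) - ((i - (t : ℕ) : ℕ) : ℝ)|
                = |((s : ℕ) : ℝ) - ((t : ℕ) : ℝ)| := by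
              rw [Nat.cast_sub hs', Nat.cast_sub ht',
                show (i : ℝ) - ((s : ℕ) : ℝ) - ((i : ℝ) - ((t : ℕ) : ℝ))
                  = ((t : ℕ) : ℝ) - ((s : ℕ) : ℝ) from by ring]
              exact abs_sub_comm _ _
            constructor
            · have h1 : (1 / c) * |((i - (s : ℕ) : ℕ) : ℝ) - ((i - (t : ℕ) : ℕ) : ℝ)| - c
                  ≤ (dG.d (θ s) (θ t) : ℝ) := h.1
              rw [habs] at h1; exact h1
            · have h2 : (dG.d (θ s) (θ t) : ℝ)
                  ≤ c * |((i - (s : ℕ) : ℕ) : ℝ) - ((i - (t : ℕ) : ℕ) : ℝ)| + c := h.2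
              rw [habs] at h2; exact h2
        have hθpts : ∀ k : Fin (i + 1), D ≤ dG.d 1 (θ k) := by
          intro k
          have h1 : D + 1 ≤ dG.d 1 (γ (i - (k : ℕ))) := hside _ (Nat.sub_le _ _)
          have h2 : D + 1 ≤ dG.d 1 (θ k) := by
            simp only [hθdef]
            exact h1
          try omega
        have hd := hkey i θ hθq hθpts
        have he0 : θ 0 = γ i := by
          simp only [hθdef]
          try congr 1
          try simp
        have hel : θ (Fin.last i) = γ 0 := by
          simp only [hθdef]
          try congr 1
          try simp [Fin.val_last]
        rw [he0, hel] at hd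
        exact ⟨γ 0 • o, hM0, by linarith [dist_triangle x (γ i • o) (γ 0 • o)]⟩
      · -- towards the limit q
        have hdk : ∀ k : ℕ, dist (γ i • o) (γ (i + k) • o) ≤ ε / 2 := by
          intro k
          set θ : Fin (k + 1) → G := fun j => γ (i + (j : ℕ)) with hθdef
          have hθq : dG.IsQuasigeodesic c θ := by
            constructor
            · intro j
              have e1 : θ j.castSucc = γ (i + (j : ℕ)) := by
                simp only [hθdef]
                try congr 1
                try simp only [Fin.coe_castSucc]
              have e2 : θ j.succ = γ ((i + (j : ℕ)) + 1) := by
                simp only [hθdef]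
                try congr 1
                try simp only [Fin.val_succ]
                try omega
              rw [e1, e2]
              exact hγ.1 _
            · intro s t
              have h := hγ.2 (i + (s : ℕ)) (i + (t : ℕ))
              have habs : |((i + (s : ℕ) : ℕ) : ℝ) - ((i + (t : ℕ) : ℕ) : ℝ)|
                  = |((s : ℕ) : ℝ) - ((t : ℕ) : ℝ)| := by
                try push_cast
                rw [show (i : ℝ) + ((s : ℕ) : ℝ) - ((i : ℝ) + ((t : ℕ) : ℝ))
                  = ((s : ℕ) : ℝ) - ((t : ℕ) : ℝ) from by ring]
              constructor
              · have h1 : (1 / c) * |((i + (s : ℕ) : ℕ) : ℝ) - ((i + (t : ℕ) : ℕ) : ℝ)| - c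
                    ≤ (dG.d (θ s) (θ t) : ℝ) := h.1
                rw [habs] at h1; exact h1
              · have h2 : (dG.d (θ s) (θ t) : ℝ)
                    ≤ c * |((i + (s : ℕ) : ℕ) : ℝ) - ((i + (t : ℕ) : ℕ) : ℝ)| + c := h.2
                rw [habs] at h2; exact h2
          have hθpts : ∀ j : Fin (k + 1), D ≤ dG.d 1 (θ j) := by
            intro j
            have h1 : D + 1 ≤ dG.d 1 (γ (i + (j : ℕ))) := hside _ (Nat.le_add_right _ _)
            have h2 : D + 1 ≤ dG.d 1 (θ j) := by
              simp only [hθdef]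
              exact h1
            try omega
          have hd := hkey k θ hθq hθpts
          have he0 : θ 0 = γ i := by
            simp only [hθdef]
            try congr 1
            try simp
          have hel : θ (Fin.last k) = γ (i + k) := by
            simp only [hθdef]
            try congr 1
            try simp [Fin.val_last]
          rw [he0, hel] at hd
          exact hd
        have hsub : Tendsto (fun k : ℕ => γ (i + k) • o) atTop (nhds q) := by
          have h1 := hq.comp (tendsto_add_atTop_nat i)
          refine Tendsto.congr (fun k => ?_) h1
          show γ (k + i) • o = γ (i + k) • o
          rw [Nat.add_comm k i]
        have hlim : dist (γ i • o) q ≤ ε / 2 :=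
          le_of_tendsto (tendsto_const_nhds.dist hsub) (Filter.Eventually.of_forall hdk)
        exact ⟨q, hqM, by linarith [dist_triangle x (γ i • o) q]⟩
    -- ================= line case =================
    · obtain ⟨γ, hγ, ⟨q₁, hq₁M, hq₁⟩, ⟨q₂, hq₂M, hq₂⟩, i, rfl⟩ := hyLine
      have hdi : N₀ < dG.d 1 (γ i) := hbig _ hxy
      have hdich : (∀ s : ℤ, s ≤ i → D + 1 ≤ dG.d 1 (γ s)) ∨
          (∀ t : ℤ, i ≤ t → D + 1 ≤ dG.d 1 (γ t)) := by
        by_contra hcon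
        push_neg at hcon
        obtain ⟨⟨s, hsi, hs⟩, ⟨t, hti, ht⟩⟩ := hcon
        have hsD : (dG.d 1 (γ s) : ℝ) ≤ D := by exact_mod_cast Nat.lt_succ_iff.1 hs
        have htD : (dG.d 1 (γ t) : ℝ) ≤ D := by exact_mod_cast Nat.lt_succ_iff.1 ht
        have h1 : (dG.d (γ s) (γ t) : ℝ) ≤ 2 * D := by
          have h2 : dG.d (γ s) (γ t) ≤ dG.d (γ s) 1 + dG.d 1 (γ t) := dG.d_tri _ _ _
          rw [dG.d_symm (γ s) 1] at h2
          have h4 : (dG.d (γ s) (γ t) : ℝ) ≤ (dG.d 1 (γ s) : ℝ) + (dG.d 1 (γ t) : ℝ) := by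
            exact_mod_cast h2
          linarith
        have h5 := (hγ.2 s t).1
        have hX : |(s : ℝ) - (t : ℝ)| ≤ c * (2 * D + c) := by
          have h6 : (1 / c) * |(s : ℝ) - (t : ℝ)| ≤ 2 * D + c := by linarith
          have h7 := mul_le_mul_of_nonneg_left h6 hc.le
          have h8 : c * ((1 / c) * |(s : ℝ) - (t : ℝ)|) = |(s : ℝ) - (t : ℝ)| := by field_simp
          linarith
        have hsr : (s : ℝ) ≤ (i : ℝ) := by exact_mod_cast hsi
        have htr : (i : ℝ) ≤ (t : ℝ) := by exact_mod_cast hti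
        have hXi : |(s : ℝ) - (i : ℝ)| ≤ c * (2 * D + c) := by
          have h9 : |(s : ℝ) - (i : ℝ)| = (i : ℝ) - (s : ℝ) := by
            rw [abs_sub_comm]; exact abs_of_nonneg (by linarith)
          have h10 : |(s : ℝ) - (t : ℝ)| = (t : ℝ) - (s : ℝ) := by
            rw [abs_sub_comm]; exact abs_of_nonneg (by linarith)
          rw [h9]; rw [h10] at hX; linarith
        have h11 := (hγ.2 s i).2
        have h12 : (dG.d 1 (γ i) : ℝ) ≤ (dG.d 1 (γ s) : ℝ) + (dG.d (γ s) (γ i) : ℝ) := by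
          exact_mod_cast dG.d_tri 1 (γ s) (γ i)
        have h14 : (dG.d (γ s) (γ i) : ℝ) ≤ c * (c * (2 * D + c)) + c := by
          have h15 := mul_le_mul_of_nonneg_left hXi hc.le
          linarith
        have h16 : ((N₀ : ℕ) : ℝ) < (dG.d 1 (γ i) : ℝ) := by exact_mod_cast hdi
        linarith
      rcases hdich with hside | hside
      · -- towards q₂ (the negative direction)
        have hdk : ∀ k : ℕ, dist (γ i • o) (γ (i - (k : ℤ)) • o) ≤ ε / 2 := by
          intro k
          set θ : Fin (k + 1) → G := fun j => γ (i - ((j : ℕ) : ℤ)) with hθdef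
          have hθq : dG.IsQuasigeodesic c θ := by
            constructor
            · intro j
              have e1 : θ j.castSucc = γ ((i - (((j : ℕ) : ℤ) + 1)) + 1) := by
                simp only [hθdef]
                try congr 1
                try simp only [Fin.coe_castSucc]
                try ring
              have e2 : θ j.succ = γ (i - (((j : ℕ) : ℤ) + 1)) := by
                simp only [hθdef]
                try congr 1
                try simp only [Fin.val_succ]
                try push_cast
                try ring
              rw [e1, e2, dG.d_symm]
              exact hγ.1 _
            · intro s t
              have h := hγ.2 (i - ((s : ℕ) : ℤ)) (i - ((t : ℕ) : ℤ))
              have habs : |((i - ((s : ℕ) : ℤ) : ℤ) : ℝ) - ((i - ((t : ℕ) : ℤ) : ℤ) : ℝ)|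
                  = |((s : ℕ) : ℝ) - ((t : ℕ) : ℝ)| := by
                try push_cast
                rw [show (i : ℝ) - ((s : ℕ) : ℝ) - ((i : ℝ) - ((t : ℕ) : ℝ))
                  = ((t : ℕ) : ℝ) - ((s : ℕ) : ℝ) from by ring]
                exact abs_sub_comm _ _
              constructor
              · have h1 : (1 / c) * |((i - ((s : ℕ) : ℤ) : ℤ) : ℝ) - ((i - ((t : ℕ) : ℤ) : ℤ) : ℝ)| - c
                    ≤ (dG.d (θ s) (θ t) : ℝ) := h.1
                rw [habs] at h1; exact h1
              · have h2 : (dG.d (θ s) (θ t) : ℝ)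
                    ≤ c * |((i - ((s : ℕ) : ℤ) : ℤ) : ℝ) - ((i - ((t : ℕ) : ℤ) : ℤ) : ℝ)| + c := h.2
                rw [habs] at h2; exact h2
          have hθpts : ∀ j : Fin (k + 1), D ≤ dG.d 1 (θ j) := by
            intro j
            have h1 : D + 1 ≤ dG.d 1 (γ (i - ((j : ℕ) : ℤ))) := hside _ (by omega)
            have h2 : D + 1 ≤ dG.d 1 (θ j) := by
              simp only [hθdef]
              exact h1
            try omega
          have hd := hkey k θ hθq hθpts
          have he0 : θ 0 = γ i := by
            simp only [hθdef]
            try congr 1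
            try simp
          have hel : θ (Fin.last k) = γ (i - (k : ℤ)) := by
            simp only [hθdef]
            try congr 1
            try simp [Fin.val_last]
          rw [he0, hel] at hd
          exact hd
        have hsub : Tendsto (fun k : ℕ => γ (i - (k : ℤ)) • o) atTop (nhds q₂) := by
          set a := i.natAbs with hadef
          set c₁ := ((a : ℤ) - i).toNat with hc₁def
          refine (tendsto_add_atTop_iff_nat a).1 ?_
          have h1 := hq₂.comp (tendsto_add_atTop_nat c₁)
          refine Tendsto.congr (fun k => ?_) h1
          show γ (-(((k + c₁ : ℕ)) : ℤ)) • o = γ (i - (((k + a : ℕ)) : ℤ)) • o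
          rw [show -(((k + c₁ : ℕ)) : ℤ) = i - (((k + a : ℕ)) : ℤ) from by push_cast; omega]
        have hlim : dist (γ i • o) q₂ ≤ ε / 2 :=
          le_of_tendsto (tendsto_const_nhds.dist hsub) (Filter.Eventually.of_forall hdk)
        exact ⟨q₂, hq₂M, by linarith [dist_triangle x (γ i • o) q₂]⟩
      · -- towards q₁ (the positive direction)
        have hdk : ∀ k : ℕ, dist (γ i • o) (γ (i + (k : ℤ)) • o) ≤ ε / 2 := by
          intro k
          set θ : Fin (k + 1) → G := fun j => γ (i + ((j : ℕ) : ℤ)) with hθdef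
          have hθq : dG.IsQuasigeodesic c θ := by
            constructor
            · intro j
              have e1 : θ j.castSucc = γ (i + ((j : ℕ) : ℤ)) := by
                simp only [hθdef]
                try congr 1
                try simp only [Fin.coe_castSucc]
              have e2 : θ j.succ = γ ((i + ((j : ℕ) : ℤ)) + 1) := by
                simp only [hθdef]
                try congr 1
                try simp only [Fin.val_succ]
                try push_cast
                try ring
              rw [e1, e2]
              exact hγ.1 _
            · intro s t
              have h := hγ.2 (i + ((s : ℕ) : ℤ)) (i + ((t : ℕ) : ℤ))
              have habs : |((i + ((s : ℕ) : ℤ) : ℤ) : ℝ) - ((i + ((t : ℕ) : ℤ) : ℤ) : ℝ)|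
                  = |((s : ℕ) : ℝ) - ((t : ℕ) : ℝ)| := by
                try push_cast
                rw [show (i : ℝ) + ((s : ℕ) : ℝ) - ((i : ℝ) + ((t : ℕ) : ℝ))
                  = ((s : ℕ) : ℝ) - ((t : ℕ) : ℝ) from by ring]
              constructor
              · have h1 : (1 / c) * |((i + ((s : ℕ) : ℤ) : ℤ) : ℝ) - ((i + ((t : ℕ) : ℤ) : ℤ) : ℝ)| - c
                    ≤ (dG.d (θ s) (θ t) : ℝ) := h.1
                rw [habs] at h1; exact h1
              · have h2 : (dG.d (θ s) (θ t) : ℝ)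
                    ≤ c * |((i + ((s : ℕ) : ℤ) : ℤ) : ℝ) - ((i + ((t : ℕ) : ℤ) : ℤ) : ℝ)| + c := h.2
                rw [habs] at h2; exact h2
          have hθpts : ∀ j : Fin (k + 1), D ≤ dG.d 1 (θ j) := by
            intro j
            have h1 : D + 1 ≤ dG.d 1 (γ (i + ((j : ℕ) : ℤ))) := hside _ (by omega)
            have h2 : D + 1 ≤ dG.d 1 (θ j) := by
              simp only [hθdef]
              exact h1
            try omega
          have hd := hkey k θ hθq hθpts
          have he0 : θ 0 = γ i := by
            simp only [hθdef]
            try congr 1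
            try simp
          have hel : θ (Fin.last k) = γ (i + (k : ℤ)) := by
            simp only [hθdef]
            try congr 1
            try simp [Fin.val_last]
          rw [he0, hel] at hd
          exact hd
        have hsub : Tendsto (fun k : ℕ => γ (i + (k : ℤ)) • o) atTop (nhds q₁) := by
          set a := i.natAbs with hadef
          set c₀ := (i + (a : ℤ)).toNat with hc₀def
          refine (tendsto_add_atTop_iff_nat a).1 ?_
          have h1 := hq₁.comp (tendsto_add_atTop_nat c₀)
          refine Tendsto.congr (fun k => ?_) h1
          show γ ((((k + c₀ : ℕ)) : ℤ)) • o = γ (i + (((k + a : ℕ)) : ℤ)) • o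
          rw [show (((k + c₀ : ℕ)) : ℤ) = i + (((k + a : ℕ)) : ℤ) from by push_cast; omega]
        have hlim : dist (γ i • o) q₁ ≤ ε / 2 :=
          le_of_tendsto (tendsto_const_nhds.dist hsub) (Filter.Eventually.of_forall hdk)
        exact ⟨q₁, hq₁M, by linarith [dist_triangle x (γ i • o) q₁]⟩
end

section
/- Let G be a finitely generated group acting 3-discontinuously and 2-cocompactly on a compactum T. Then for every c > 0 there is no c-quasigeodesic horocycle at a conical point: there is no bi-infinite c-quasigeodesic γ : ℤ → G with γ(+∞) = γ(−∞) = p for p conical. -/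
open Filter Topology

section AuxStmt17

open Filter Topology Finset

/-- The Karlsson-type upper bound for the Floyd length of a quasigeodesic
half-line whose graph distance to the basepoint is at least `ρ`. -/
noncomputable def Ebound (f : ℕ → ℝ) (C ρ : ℕ) : ℝ :=
  2 * (((C * (2 * ρ + C + 2) : ℕ) : ℝ) * f ρ + (C : ℝ) * ∑' k : ℕ, f (k + ρ))

private lemma aux_f_antitone {f : ℕ → ℝ} (hpos : ∀ n, 0 < f n)
    (hratio : ∀ n, 1 ≤ f n / f (n + 1)) : Antitone f := by
  apply antitone_nat_of_succ_le
  intro n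
  have h := hratio n
  have h2 := hpos (n + 1)
  rw [le_div_iff₀ h2] at h
  linarith

private lemma aux_tendsto_nat_mul {f : ℕ → ℝ} (hpos : ∀ n, 0 < f n) (hanti : Antitone f)
    (hsum : Summable f) :
    Tendsto (fun n : ℕ => (n : ℝ) * f n) atTop (nhds 0) := by
  rw [Metric.tendsto_atTop]
  intro ε hε
  have htail : Tendsto (fun i : ℕ => ∑' k, f (k + i)) atTop (nhds 0) := tendsto_sum_nat_add f
  obtain ⟨N, hN⟩ : ∃ N : ℕ, ∑' k, f (k + N) < ε / 4 :=
    (htail.eventually (gt_mem_nhds (by linarith : (0:ℝ) < ε / 4))).exists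
  refine ⟨2 * N + 1, fun n hn => ?_⟩
  have hNn : N ≤ n := by omega
  have key : ((n - N : ℕ) : ℝ) * f n ≤ ∑' k, f (k + N) := by
    have h1 : ∑ _k ∈ Finset.range (n - N), f n ≤ ∑ k ∈ Finset.range (n - N), f (k + N) := by
      apply Finset.sum_le_sum
      intro k hk
      apply hanti
      simp only [Finset.mem_range] at hk
      omega
    have h2 : ∑ k ∈ Finset.range (n - N), f (k + N) ≤ ∑' k, f (k + N) :=
      Summable.sum_le_tsum _ (fun i _ => (hpos _).le) ((summable_nat_add_iff N).2 hsum)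
    calc ((n - N : ℕ) : ℝ) * f n = ∑ _k ∈ Finset.range (n - N), f n := by
          simp [mul_comm]
      _ ≤ _ := h1.trans h2
  have hfn := hpos n
  have hcast : ((n - N : ℕ) : ℝ) = (n : ℝ) - N := by
    push_cast [Nat.cast_sub hNn]; ring
  have h2n : ((2 * N + 1 : ℕ) : ℝ) ≤ (n : ℝ) := by exact_mod_cast hn
  have hle : (n : ℝ) * f n ≤ 2 * (((n - N : ℕ) : ℝ) * f n) := by
    rw [hcast]
    have hx : (n : ℝ) ≤ 2 * ((n:ℝ) - N) := by push_cast at h2n; linarith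
    nlinarith [hfn.le]
  have hlt : (n : ℝ) * f n < ε := by nlinarith
  rw [Real.dist_eq, sub_zero, abs_of_nonneg (mul_nonneg (Nat.cast_nonneg n) (hpos n).le)]
  exact hlt

private lemma aux_tendsto_Ebound {f : ℕ → ℝ} (hpos : ∀ n, 0 < f n) (hanti : Antitone f)
    (hsum : Summable f) (C : ℕ) :
    Tendsto (fun ρ : ℕ => Ebound f C ρ) atTop (nhds 0) := by
  have h1 := aux_tendsto_nat_mul hpos hanti hsum
  have h2 := hsum.tendsto_atTop_zero
  have h3 : Tendsto (fun i : ℕ => ∑' k, f (k + i)) atTop (nhds 0) := tendsto_sum_nat_add f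
  have heq : (fun ρ : ℕ => Ebound f C ρ) =
      fun ρ : ℕ => ((2:ℝ) * C * 2) * ((ρ : ℝ) * f ρ) + ((2:ℝ) * C * (C + 2)) * f ρ
        + ((2:ℝ) * C) * ∑' k, f (k + ρ) := by
    funext ρ; unfold Ebound; push_cast; ring
  rw [heq]
  have := ((h1.const_mul ((2:ℝ) * C * 2)).add (h2.const_mul ((2:ℝ) * C * (C + 2)))).add
    (h3.const_mul ((2:ℝ) * C))
  simpa using this

private lemma aux_sum_div (h : ℕ → ℝ) {C : ℕ} (hC : 1 ≤ C) (M : ℕ) :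
    ∑ l ∈ Finset.range (C * M), h (l / C) = (C : ℝ) * ∑ i ∈ Finset.range M, h i := by
  induction M with
  | zero => simp
  | succ M ih =>
    have h1 : C * (M + 1) = C * M + C := by ring
    rw [h1, Finset.range_eq_Ico,
      ← Finset.sum_Ico_consecutive (fun l => h (l / C)) (Nat.zero_le (C * M))
        (Nat.le_add_right _ _), ← Finset.range_eq_Ico, ih]
    have h2 : ∑ l ∈ Finset.Ico (C * M) (C * M + C), h (l / C) = (C : ℝ) * h M := by
      rw [Finset.sum_Ico_eq_sum_range]
      have hcg : ∀ i ∈ Finset.range (C * M + C - C * M), h ((C * M + i) / C) = h M := by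
        intro i hi
        simp only [Finset.mem_range] at hi
        have hiC : i < C := by omega
        congr 1
        rw [Nat.mul_add_div (by omega), Nat.div_eq_of_lt hiC]
        omega
      rw [Finset.sum_congr rfl hcg]
      simp [mul_comm]
    rw [h2, Finset.sum_range_succ]
    ring

private lemma aux_karlsson {f : ℕ → ℝ} (hpos : ∀ n, 0 < f n) (hanti : Antitone f)
    (hsum : Summable f) {C : ℕ} (hC : 1 ≤ C) (ρ kstar : ℕ) (η : ℕ → ℕ)
    (hρ : ∀ k, ρ ≤ η k)
    (hfar : ∀ k, (Nat.dist k kstar : ℝ) / C - C - ρ ≤ (η k : ℝ)) (K : ℕ) :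
    ∑ k ∈ Finset.range K, f (min (η k) (η (k + 1))) ≤ Ebound f C ρ := by
  have hCpos : (0:ℝ) < C := by exact_mod_cast hC
  set J := C * (2 * ρ + C + 2) with hJ
  set Gg : ℕ → ℝ := fun j => if j < J then f ρ else f (ρ + 1 + (j - J) / C) with hGg
  have hGg_nonneg : ∀ j, 0 ≤ Gg j := by
    intro j; rw [hGg]; dsimp only; split <;> exact (hpos _).le
  have hGg_le : ∀ j, Gg j ≤ f ρ := by
    intro j; rw [hGg]; dsimp only; split
    · exact le_rfl
    · exact hanti (by generalize (j - J) / C = x; omega)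
  have hfar' : ∀ k, (Nat.dist k kstar : ℝ) ≤ ((η k : ℝ) + C + ρ) * C := by
    intro k
    have h := hfar k
    have h2 : (Nat.dist k kstar : ℝ) / C ≤ (η k : ℝ) + C + ρ := by linarith
    calc (Nat.dist k kstar : ℝ) = (Nat.dist k kstar : ℝ) / C * C := by
          field_simp
      _ ≤ _ := mul_le_mul_of_nonneg_right h2 hCpos.le
  -- Step 1: pointwise domination
  have step1 : ∀ k, f (min (η k) (η (k + 1))) ≤ Gg (Nat.dist k kstar) := by
    intro k
    set j := Nat.dist k kstar with hj
    rw [hGg]; dsimp only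
    split
    · exact hanti (le_min (hρ k) (hρ (k + 1)))
    · rename_i hjJ
      push_neg at hjJ
      set i := (j - J) / C with hi
      have hji : J + C * i ≤ j := by
        have h1 : C * i ≤ j - J := by
          rw [hi, mul_comm]; exact Nat.div_mul_le_self (j - J) C
        omega
      have hjiR : ((J : ℝ) + C * i) ≤ (j : ℝ) := by exact_mod_cast hji
      have hJR : (J : ℝ) = (C : ℝ) * (2 * ρ + C + 2) := by rw [hJ]; push_cast; ring
      have hdist1 : (j : ℝ) - 1 ≤ (Nat.dist (k + 1) kstar : ℝ) := by
        have htri : j ≤ 1 + Nat.dist (k + 1) kstar := by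
          have h1 : Nat.dist k kstar ≤ Nat.dist k (k + 1) + Nat.dist (k + 1) kstar :=
            Nat.dist.triangle_inequality _ _ _
          have h2 : Nat.dist k (k + 1) = 1 := by simp [Nat.dist]
          omega
        have := (Nat.cast_le (α := ℝ)).2 htri
        push_cast at this
        linarith
      have hC1R : (1:ℝ) ≤ C := by exact_mod_cast hC
      -- bound η k
      have hek : (ρ : ℝ) + 1 + i ≤ (η k : ℝ) := by
        have h1 := hfar' k
        rw [← hj] at h1
        have h2 : (C:ℝ) * ((ρ:ℝ) + 1 + i) ≤ (C:ℝ) * (η k : ℝ) := by nlinarith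
        exact le_of_mul_le_mul_left h2 hCpos
      have hek1 : (ρ : ℝ) + 1 + i ≤ (η (k + 1) : ℝ) := by
        have h1 := hfar' (k + 1)
        have h2 : (C:ℝ) * ((ρ:ℝ) + 1 + i) ≤ (C:ℝ) * (η (k + 1) : ℝ) := by nlinarith
        exact le_of_mul_le_mul_left h2 hCpos
      have hmin : ρ + 1 + i ≤ min (η k) (η (k + 1)) := by
        have hk1 : ρ + 1 + i ≤ η k := by exact_mod_cast hek
        have hk2 : ρ + 1 + i ≤ η (k + 1) := by exact_mod_cast hek1
        exact le_min hk1 hk2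
      exact hanti hmin
  -- Step 3: bound on initial sums of Gg
  have step3 : ∀ N : ℕ, ∑ x ∈ Finset.range N, Gg x
      ≤ (J : ℝ) * f ρ + (C : ℝ) * ∑' k : ℕ, f (k + ρ) := by
    intro N
    have hT0 : (0:ℝ) ≤ ∑' k : ℕ, f (k + ρ) := tsum_nonneg fun _ => (hpos _).le
    rcases le_or_gt N J with hNJ | hJN
    · calc ∑ x ∈ Finset.range N, Gg x ≤ ∑ _x ∈ Finset.range N, f ρ :=
            Finset.sum_le_sum fun x _ => hGg_le x
        _ = (N : ℝ) * f ρ := by simp [mul_comm]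
        _ ≤ (J : ℝ) * f ρ := by
            apply mul_le_mul_of_nonneg_right _ (hpos ρ).le
            exact_mod_cast hNJ
        _ ≤ _ := le_add_of_nonneg_right (by positivity)
    · rw [Finset.range_eq_Ico, ← Finset.sum_Ico_consecutive Gg (Nat.zero_le J) hJN.le]
      have hA : ∑ x ∈ Finset.Ico 0 J, Gg x ≤ (J : ℝ) * f ρ := by
        calc ∑ x ∈ Finset.Ico 0 J, Gg x ≤ ∑ _x ∈ Finset.Ico 0 J, f ρ :=
              Finset.sum_le_sum fun x _ => hGg_le x
          _ = (J : ℝ) * f ρ := by simp [mul_comm]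
      have hB : ∑ x ∈ Finset.Ico J N, Gg x ≤ (C : ℝ) * ∑' k : ℕ, f (k + ρ) := by
        rw [Finset.sum_Ico_eq_sum_range]
        have hGgJ : ∀ l, Gg (J + l) = f (ρ + 1 + l / C) := by
          intro l; rw [hGg]; dsimp only
          rw [if_neg (by omega), Nat.add_sub_cancel_left]
        rw [Finset.sum_congr rfl fun l _ => hGgJ l]
        set M := N - J with hM
        calc ∑ l ∈ Finset.range M, f (ρ + 1 + l / C)
            ≤ ∑ l ∈ Finset.range (C * M), f (ρ + 1 + l / C) := by
              apply Finset.sum_le_sum_of_subset_of_nonneg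
              · exact Finset.range_subset_range.2 (Nat.le_mul_of_pos_left M (by omega))
              · exact fun _ _ _ => (hpos _).le
          _ = (C : ℝ) * ∑ i ∈ Finset.range M, f (ρ + 1 + i) :=
              aux_sum_div (fun i => f (ρ + 1 + i)) hC M
          _ ≤ (C : ℝ) * ∑' k : ℕ, f (k + ρ) := by
              apply mul_le_mul_of_nonneg_left _ hCpos.le
              have hre : ∑ i ∈ Finset.range M, f (ρ + 1 + i)
                  = ∑ i ∈ Finset.Ico 1 (M + 1), f (i + ρ) := by
                rw [Finset.sum_Ico_eq_sum_range]
                apply Finset.sum_congr (by norm_num)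
                intro i _
                congr 1
                omega
              rw [hre]
              exact Summable.sum_le_tsum _ (fun i _ => (hpos _).le) ((summable_nat_add_iff ρ).2 hsum)
      linarith
  -- Step 2: regroup by distance to kstar
  set N := max K (kstar + 1) with hN
  have hKN : K ≤ N := le_max_left _ _
  have hks : kstar + 1 ≤ N := le_max_right _ _
  have step2 : ∑ k ∈ Finset.range K, Gg (Nat.dist k kstar)
      ≤ 2 * ∑ x ∈ Finset.range N, Gg x := by
    have hsub : ∑ k ∈ Finset.range K, Gg (Nat.dist k kstar)
        ≤ ∑ k ∈ Finset.range N, Gg (Nat.dist k kstar) :=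
      Finset.sum_le_sum_of_subset_of_nonneg (Finset.range_subset_range.2 hKN)
        (fun i _ _ => hGg_nonneg _)
    have hsplit : ∑ k ∈ Finset.range N, Gg (Nat.dist k kstar)
        = ∑ k ∈ Finset.range kstar, Gg (Nat.dist k kstar)
          + ∑ k ∈ Finset.Ico kstar N, Gg (Nat.dist k kstar) := by
      rw [Finset.range_eq_Ico, Finset.range_eq_Ico]
      exact (Finset.sum_Ico_consecutive _ (Nat.zero_le kstar) (by omega : kstar ≤ N)).symm
    have hpart1 : ∑ k ∈ Finset.range kstar, Gg (Nat.dist k kstar)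
        ≤ ∑ x ∈ Finset.range N, Gg x := by
      have he1 : ∑ k ∈ Finset.range kstar, Gg (Nat.dist k kstar)
          = ∑ k ∈ Finset.range kstar, Gg (kstar - 1 - k + 1) := by
        apply Finset.sum_congr rfl
        intro k hk
        simp only [Finset.mem_range] at hk
        congr 1
        rw [Nat.dist_eq_sub_of_le hk.le]
        omega
      have hrefl : ∑ k ∈ Finset.range kstar, Gg (kstar - 1 - k + 1)
          = ∑ j ∈ Finset.range kstar, Gg (j + 1) :=
        Finset.sum_range_reflect (fun j => Gg (j + 1)) kstar
      rw [he1, hrefl]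
      have he2 : ∑ j ∈ Finset.range kstar, Gg (j + 1)
          = ∑ j ∈ Finset.Ico 1 (kstar + 1), Gg j := by
        rw [Finset.sum_Ico_eq_sum_range]
        apply Finset.sum_congr (by norm_num)
        intro i _
        congr 1
        omega
      rw [he2, Finset.range_eq_Ico]
      apply Finset.sum_le_sum_of_subset_of_nonneg
      · apply Finset.Ico_subset_Ico (Nat.zero_le 1) (by omega)
      · exact fun i _ _ => hGg_nonneg _
    have hpart2 : ∑ k ∈ Finset.Ico kstar N, Gg (Nat.dist k kstar)
        ≤ ∑ x ∈ Finset.range N, Gg x := by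
      rw [Finset.sum_Ico_eq_sum_range]
      have he1 : ∑ l ∈ Finset.range (N - kstar), Gg (Nat.dist (kstar + l) kstar)
          = ∑ l ∈ Finset.range (N - kstar), Gg l := by
        apply Finset.sum_congr rfl
        intro l _; congr 1
        rw [Nat.dist_comm, Nat.dist_eq_sub_of_le (Nat.le_add_right _ _)]
        omega
      rw [he1]
      apply Finset.sum_le_sum_of_subset_of_nonneg
      · exact Finset.range_subset_range.2 (by omega)
      · exact fun i _ _ => hGg_nonneg _
    calc ∑ k ∈ Finset.range K, Gg (Nat.dist k kstar)
        ≤ ∑ k ∈ Finset.range N, Gg (Nat.dist k kstar) := hsub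
      _ = _ := hsplit
      _ ≤ 2 * ∑ x ∈ Finset.range N, Gg x := by linarith
  calc ∑ k ∈ Finset.range K, f (min (η k) (η (k + 1)))
      ≤ ∑ k ∈ Finset.range K, Gg (Nat.dist k kstar) :=
        Finset.sum_le_sum fun k _ => step1 k
    _ ≤ 2 * ∑ x ∈ Finset.range N, Gg x := step2
    _ ≤ 2 * ((J : ℝ) * f ρ + (C : ℝ) * ∑' k : ℕ, f (k + ρ)) := by linarith [step3 N]
    _ = Ebound f C ρ := by rw [Ebound, hJ]

private lemma aux_natdist_cast (s t : ℕ) : (Nat.dist s t : ℝ) = |(s:ℝ) - (t:ℝ)| := by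
  rcases le_total s t with h | h
  · rw [Nat.dist_eq_sub_of_le h, Nat.cast_sub h, abs_sub_comm,
      abs_of_nonneg (sub_nonneg.2 (by exact_mod_cast h))]
  · rw [Nat.dist_comm, Nat.dist_eq_sub_of_le h, Nat.cast_sub h,
      abs_of_nonneg (sub_nonneg.2 (by exact_mod_cast h))]

private lemma aux_side {G Tt : Type} [Group G] [MetricSpace Tt] [MulAction G Tt]
    (o : Tt) (dG : GraphDist G) (f : ℕ → ℝ)
    (hpos : ∀ n, 0 < f n) (hanti : Antitone f) (hsum : Summable f)
    (hcomp : ∀ g h : G, dist (g • o) (h • o) ≤ dG.floydDist f 1 g h)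
    {C : ℕ} (hC : 1 ≤ C) (δ : ℕ → G)
    (hstep : ∀ k, dG.d (δ k) (δ (k + 1)) ≤ 1)
    (hlow : ∀ s t : ℕ, (Nat.dist s t : ℝ) / C - C ≤ (dG.d (δ s) (δ t) : ℝ))
    (q : Tt) (hq : Tendsto (fun k : ℕ => δ k • o) atTop (nhds q)) :
    dist (δ 0 • o) q ≤ Ebound f C (sInf (Set.range fun k => dG.d 1 (δ k))) := by
  set η : ℕ → ℕ := fun k => dG.d 1 (δ k) with hη
  set ρ := sInf (Set.range η) with hρdef
  obtain ⟨kstar, hkstar⟩ : ∃ k, η k = ρ := Nat.sInf_mem (Set.range_nonempty η)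
  have hρle : ∀ k, ρ ≤ η k := fun k => Nat.sInf_le ⟨k, rfl⟩
  have hfar : ∀ k, (Nat.dist k kstar : ℝ) / C - C - ρ ≤ (η k : ℝ) := by
    intro k
    have htri : dG.d (δ kstar) (δ k) ≤ dG.d (δ kstar) 1 + dG.d 1 (δ k) := dG.d_tri _ _ _
    have hsym : dG.d (δ kstar) 1 = ρ := by rw [dG.d_symm]; exact hkstar
    have hlow2 := hlow kstar k
    rw [Nat.dist_comm]
    have h0 : dG.d (δ kstar) (δ k) ≤ ρ + η k := by
      rw [← hsym]; exact htri
    have h1 : (dG.d (δ kstar) (δ k) : ℝ) ≤ (ρ : ℝ) + (η k : ℝ) := by exact_mod_cast h0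
    linarith
  have edge : ∀ k, dist (δ k • o) (δ (k + 1) • o) ≤ f (min (η k) (η (k + 1))) := by
    intro k
    refine (hcomp _ _).trans ?_
    unfold GraphDist.floydDist
    apply csInf_le
    · refine ⟨0, ?_⟩
      rintro L ⟨n, γ', _, _, _, rfl⟩
      exact Finset.sum_nonneg fun i _ => (hpos _).le
    · refine ⟨1, ![δ k, δ (k + 1)], ?_, by simp, by simp [Fin.last], ?_⟩
      · intro i
        fin_cases i
        simpa using hstep k
      · unfold GraphDist.floydLen
        rw [Fin.sum_univ_one]
        simp [hη]
  have tel : ∀ K : ℕ, dist (δ 0 • o) (δ K • o)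
      ≤ ∑ k ∈ Finset.range K, f (min (η k) (η (k + 1))) := by
    intro K
    induction K with
    | zero => simp
    | succ K ih =>
      rw [Finset.sum_range_succ]
      calc dist (δ 0 • o) (δ (K + 1) • o)
          ≤ dist (δ 0 • o) (δ K • o) + dist (δ K • o) (δ (K + 1) • o) := dist_triangle _ _ _
        _ ≤ _ := add_le_add ih (edge K)
  have hEb : ∀ K : ℕ, dist (δ 0 • o) (δ K • o) ≤ Ebound f C ρ := fun K =>
    (tel K).trans (aux_karlsson hpos hanti hsum hC ρ kstar η hρle hfar K)
  have hdq : Tendsto (fun K : ℕ => dist (δ K • o) q) atTop (nhds 0) := by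
    have := hq.dist (tendsto_const_nhds (x := q))
    simpa using this
  have hlim : Tendsto (fun K : ℕ => Ebound f C ρ + dist (δ K • o) q) atTop
      (nhds (Ebound f C ρ)) := by
    have := (tendsto_const_nhds (x := Ebound f C ρ)).add hdq
    simpa using this
  refine ge_of_tendsto' hlim fun K => ?_
  calc dist (δ 0 • o) q ≤ dist (δ 0 • o) (δ K • o) + dist (δ K • o) q := dist_triangle _ _ _
    _ ≤ Ebound f C ρ + dist (δ K • o) q := add_le_add_left (hEb K) _

end AuxStmt17

/-- in the attractor sum `T̃ = Λ(G) ⊔ G` of a 3-discontinuous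
2-cocompact action of a finitely generated group `G`, there is no
`c`-quasigeodesic horocycle at a conical point: no bi-infinite
`c`-quasigeodesic `γ : ℤ → G` has both its targets `γ(±∞)` equal to a conical
point `p`. -/
theorem stmt17 {G Tt : Type} [Group G]
    [MetricSpace Tt] [CompactSpace Tt] [MulAction G Tt]
    (hcont : ∀ g : G, Continuous (fun x : Tt => g • x))
    (h3 : ThreeDiscontinuous G Tt) (h2 : TwoCocompact G Tt)
    (o : Tt) (hinj : Function.Injective (fun g : G => g • o))
    (hopen : ∀ g : G, IsOpen ({g • o} : Set Tt))
    (dG : GraphDist G)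
    (hinv : ∀ g x y : G, dG.d (g * x) (g * y) = dG.d x y)
    (f : ℕ → ℝ) (K : ℝ) (hK : 0 < K) (hf : IsFloydFunction f K)
    (hcomp : ∀ g h : G, dist (g • o) (h • o) ≤ dG.floydDist f 1 g h)
    (c : ℝ) (hc : 0 < c) (p : Tt) (hp : IsConical G p)
    (γ : ℤ → G) (hγ : dG.IsQuasigeodesicLine c γ) :
    ¬ (Tendsto (fun k : ℕ => γ (k : ℤ) • o) atTop (nhds p) ∧
       Tendsto (fun k : ℕ => γ (-(k : ℤ)) • o) atTop (nhds p)) := by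
  rintro ⟨hplus, hminus⟩
  obtain ⟨g, a, b, hginj, hab, ha, hb⟩ := hp
  obtain ⟨hfpos, hfrat, hfsum⟩ := hf
  have hanti : Antitone f := aux_f_antitone hfpos fun n => (hfrat n).1
  set C : ℕ := max 1 ⌈c⌉₊ with hCdef
  have hC1 : 1 ≤ C := le_max_left _ _
  have hCposR : (0:ℝ) < C := by exact_mod_cast hC1
  have hcC : c ≤ (C:ℝ) := by
    refine le_trans (Nat.le_ceil c) ?_
    exact_mod_cast le_max_right 1 ⌈c⌉₊
  have hlowZ : ∀ s t : ℤ, |(s:ℝ) - (t:ℝ)| / C - C ≤ (dG.d (γ s) (γ t) : ℝ) := by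
    intro s t
    have h := (hγ.2 s t).1
    have habs : (0:ℝ) ≤ |(s:ℝ) - (t:ℝ)| := abs_nonneg _
    have hinv1 : 1 / (C:ℝ) ≤ 1 / c := one_div_le_one_div_of_le hc hcC
    have h1 : |(s:ℝ) - (t:ℝ)| / C ≤ 1 / c * |(s:ℝ) - (t:ℝ)| := by
      rw [div_eq_mul_inv, ← one_div, mul_comm]
      exact mul_le_mul_of_nonneg_right hinv1 habs
    linarith
  -- the start point of the horocycle is not p
  have hne : γ 0 • o ≠ p := by
    intro hpe
    have hmem : {γ 0 • o} ∈ nhds p := (hopen (γ 0)).mem_nhds (by simp [hpe])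
    have hev : (fun k : ℕ => γ (k:ℤ) • o) ⁻¹' {γ 0 • o} ∈ atTop := hplus hmem
    rw [Filter.mem_atTop_sets] at hev
    obtain ⟨N, hN⟩ := hev
    set k : ℕ := N + ⌈c * c⌉₊ + 1 with hk
    have hk1 : γ (k:ℤ) • o = γ 0 • o := hN k (by omega)
    have hk2 : γ (k:ℤ) = γ 0 := hinj hk1
    have hd0 : dG.d (γ (k:ℤ)) (γ 0) = 0 := by rw [hk2]; exact dG.d_self _
    have hlow := (hγ.2 (k:ℤ) 0).1
    rw [hd0] at hlow
    simp only [Nat.cast_zero, Int.cast_zero, Int.cast_natCast, sub_zero] at hlow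
    rw [abs_of_nonneg (Nat.cast_nonneg k)] at hlow
    have h2 : 1 / c * (k:ℝ) ≤ c := by linarith
    have h3 : c * (1 / c * (k:ℝ)) ≤ c * c := mul_le_mul_of_nonneg_left h2 hc.le
    rw [← mul_assoc, mul_one_div_cancel hc.ne', one_mul] at h3
    have h4 : (⌈c * c⌉₊ : ℝ) < (k:ℝ) := by
      have h5 : ⌈c * c⌉₊ < k := by omega
      exact_mod_cast h5
    have h6 := Nat.le_ceil (c * c)
    linarith
  set ρx : ℕ → ℕ := fun n =>
      max (sInf (Set.range fun k : ℕ => dG.d 1 (g n * γ (k:ℤ))))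
          (sInf (Set.range fun k : ℕ => dG.d 1 (g n * γ (-(k:ℤ))))) with hρx
  -- the central estimate coming from the Karlsson lemma
  have hmain : ∀ n : ℕ, dist (g n • (γ 0 • o)) (g n • p) ≤ Ebound f C (ρx n) := by
    intro n
    rcases le_total (sInf (Set.range fun k : ℕ => dG.d 1 (g n * γ (-(k:ℤ)))))
      (sInf (Set.range fun k : ℕ => dG.d 1 (g n * γ (k:ℤ)))) with hcmp | hcmp
    · rw [hρx]
      dsimp only
      rw [max_eq_left hcmp]
      have hstep : ∀ k : ℕ, dG.d (g n * γ (k:ℤ)) (g n * γ ((k + 1 : ℕ):ℤ)) ≤ 1 := by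
        intro k
        rw [hinv]
        have h := hγ.1 (k:ℤ)
        have he : ((k + 1 : ℕ):ℤ) = (k:ℤ) + 1 := by push_cast; ring
        rw [he]
        exact h
      have hlow' : ∀ s t : ℕ, (Nat.dist s t : ℝ) / C - C
          ≤ (dG.d (g n * γ (s:ℤ)) (g n * γ (t:ℤ)) : ℝ) := by
        intro s t
        rw [hinv]
        have h := hlowZ (s:ℤ) (t:ℤ)
        have hd : (Nat.dist s t : ℝ) = |((s:ℤ):ℝ) - ((t:ℤ):ℝ)| := by
          push_cast
          exact aux_natdist_cast s t
        rw [hd]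
        exact h
      have hq : Tendsto (fun k : ℕ => (g n * γ (k:ℤ)) • o) atTop (nhds (g n • p)) := by
        have h2 := ((hcont (g n)).tendsto p).comp hplus
        simpa [mul_smul, Function.comp_def] using h2
      have hres := aux_side o dG f hfpos hanti hfsum hcomp hC1
        (fun k : ℕ => g n * γ (k:ℤ)) hstep hlow' (g n • p) hq
      simpa [mul_smul] using hres
    · rw [hρx]
      dsimp only
      rw [max_eq_right hcmp]
      have hstep : ∀ k : ℕ, dG.d (g n * γ (-(k:ℤ))) (g n * γ (-((k + 1 : ℕ):ℤ))) ≤ 1 := by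
        intro k
        rw [hinv, dG.d_symm]
        have h := hγ.1 (-(k:ℤ) - 1)
        have e2 : -(k:ℤ) - 1 + 1 = -(k:ℤ) := by ring
        rw [e2] at h
        have e1 : -((k + 1 : ℕ):ℤ) = -(k:ℤ) - 1 := by push_cast; ring
        rw [e1]
        exact h
      have hlow' : ∀ s t : ℕ, (Nat.dist s t : ℝ) / C - C
          ≤ (dG.d (g n * γ (-(s:ℤ))) (g n * γ (-(t:ℤ))) : ℝ) := by
        intro s t
        rw [hinv]
        have h := hlowZ (-(s:ℤ)) (-(t:ℤ))
        push_cast at h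
        have he : |-(s:ℝ) - -(t:ℝ)| = |(s:ℝ) - (t:ℝ)| := by
          rw [show -(s:ℝ) - -(t:ℝ) = -((s:ℝ) - (t:ℝ)) by ring, abs_neg]
        rw [he] at h
        rw [aux_natdist_cast]
        exact h
      have hq : Tendsto (fun k : ℕ => (g n * γ (-(k:ℤ))) • o) atTop (nhds (g n • p)) := by
        have h2 := ((hcont (g n)).tendsto p).comp hminus
        simpa [mul_smul, Function.comp_def] using h2
      have hres := aux_side o dG f hfpos hanti hfsum hcomp hC1
        (fun k : ℕ => g n * γ (-(k:ℤ))) hstep hlow' (g n • p) hq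
      simpa [mul_smul] using hres
  -- the minima over both rays tend to infinity
  have hfinite : ∀ R : ℕ, {n : ℕ | ρx n ≤ R}.Finite := by
    intro R
    have hball : {u : G | dG.d 1 u ≤ R}.Finite := dG.locallyFinite 1 R
    set B : ℕ := C * (2 * R + C) with hB
    have hSfin : ((fun j : ℤ => γ j) '' Set.Icc (-(B:ℤ)) (B:ℤ)).Finite :=
      (Set.finite_Icc _ _).image _
    have hF : (Set.image2 (fun u v : G => u * v⁻¹) {u : G | dG.d 1 u ≤ R}
        ((fun j : ℤ => γ j) '' Set.Icc (-(B:ℤ)) (B:ℤ))).Finite := hball.image2 _ hSfin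
    refine Set.Finite.subset (hF.preimage hginj.injOn) ?_
    intro n hn
    simp only [Set.mem_setOf_eq, hρx] at hn
    have hp' : sInf (Set.range fun k : ℕ => dG.d 1 (g n * γ (k:ℤ))) ≤ R :=
      le_trans (le_max_left _ _) hn
    have hm' : sInf (Set.range fun k : ℕ => dG.d 1 (g n * γ (-(k:ℤ)))) ≤ R :=
      le_trans (le_max_right _ _) hn
    obtain ⟨k2, hk2⟩ :=
      Nat.sInf_mem (Set.range_nonempty fun k : ℕ => dG.d 1 (g n * γ (k:ℤ)))
    obtain ⟨k1, hk1⟩ :=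
      Nat.sInf_mem (Set.range_nonempty fun k : ℕ => dG.d 1 (g n * γ (-(k:ℤ))))
    have hd2 : dG.d 1 (g n * γ (k2:ℤ)) ≤ R := le_trans (le_of_eq hk2) hp'
    have hd1 : dG.d 1 (g n * γ (-(k1:ℤ))) ≤ R := le_trans (le_of_eq hk1) hm'
    have htri : dG.d (γ (-(k1:ℤ))) (γ (k2:ℤ)) ≤ 2 * R := by
      have h1 : dG.d (g n * γ (-(k1:ℤ))) (g n * γ (k2:ℤ))
          ≤ dG.d (g n * γ (-(k1:ℤ))) 1 + dG.d 1 (g n * γ (k2:ℤ)) := dG.d_tri _ _ _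
      rw [hinv] at h1
      rw [dG.d_symm (g n * γ (-(k1:ℤ))) 1] at h1
      omega
    have hx : k1 + k2 ≤ B := by
      have h := hlowZ (-(k1:ℤ)) (k2:ℤ)
      push_cast at h
      have habs : |-(k1:ℝ) - (k2:ℝ)| = (k1:ℝ) + k2 := by
        rw [abs_of_nonpos (by
          have u1 : (0:ℝ) ≤ (k1:ℝ) := Nat.cast_nonneg k1
          have u2 : (0:ℝ) ≤ (k2:ℝ) := Nat.cast_nonneg k2
          linarith)]
        ring
      rw [habs] at h
      have h2 : (dG.d (γ (-(k1:ℤ))) (γ (k2:ℤ)) : ℝ) ≤ 2 * R := by exact_mod_cast htri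
      have h4 : ((k1:ℝ) + k2) / C ≤ 2 * R + C := by linarith
      have h3 : (k1:ℝ) + k2 ≤ (2 * (R:ℝ) + C) * C := by
        calc (k1:ℝ) + k2 = ((k1:ℝ) + k2) / C * C := by field_simp
          _ ≤ _ := mul_le_mul_of_nonneg_right h4 hCposR.le
      have hBR : (B:ℝ) = (2 * (R:ℝ) + C) * C := by rw [hB]; push_cast; ring
      rw [← hBR] at h3
      exact_mod_cast h3
    refine ⟨g n * γ (-(k1:ℤ)), hd1, γ (-(k1:ℤ)), ⟨-(k1:ℤ), ?_, rfl⟩, ?_⟩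
    · simp only [Set.mem_Icc]
      omega
    · simp
  have hρxT : Tendsto ρx atTop atTop := by
    refine tendsto_atTop.2 fun R => ?_
    rw [← Nat.cofinite_eq_atTop, Filter.eventually_cofinite]
    apply Set.Finite.subset (hfinite R)
    intro n hn
    simp only [Set.mem_setOf_eq, not_le] at hn ⊢
    omega
  have hElim : Tendsto (fun n => Ebound f C (ρx n)) atTop (nhds 0) :=
    (aux_tendsto_Ebound hfpos hanti hfsum C).comp hρxT
  have hA : Tendsto (fun n => dist a (g n • (γ 0 • o))) atTop (nhds 0) := by
    have h2 := (tendsto_const_nhds (x := a)).dist (ha (γ 0 • o) hne)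
    simpa using h2
  have hB2 : Tendsto (fun n => dist (g n • p) b) atTop (nhds 0) := by
    have h2 := hb.dist (tendsto_const_nhds (x := b))
    simpa using h2
  have hsum0 : Tendsto (fun n => dist a (g n • (γ 0 • o)) + Ebound f C (ρx n)
      + dist (g n • p) b) atTop (nhds 0) := by
    have h2 := (hA.add hElim).add hB2
    simpa using h2
  have hle : dist a b ≤ 0 := by
    refine ge_of_tendsto' hsum0 fun n => ?_
    calc dist a b ≤ dist a (g n • (γ 0 • o)) + dist (g n • (γ 0 • o)) (g n • p)
        + dist (g n • p) b := dist_triangle4 _ _ _ _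
      _ ≤ _ := by
        have h2 := hmain n
        gcongr
  exact hab (dist_le_zero.1 hle)
end
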